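/- arXiv:2510.13523 — 4 statements merged into one kernel-verified Lean document; each statement's English description precedes it below -/
import Mathlib

section
/- Let ε ∈ {0,1} and let N be a natural number, with N even if ε = 1. Then for every partition d of N, the set {μ ∈ P_ε(N) : μ ⪯ d} is nonempty and possesses a greatest element with respect to the dominance order; that is, there exists a unique partition d_X ∈ P_ε(N) with d_X ⪯ d such that every μ ∈ P_ε(N) with μ ⪯ d satisfies μ ⪯ d_X. -/
/-- A partition of `N`: a non-increasing list of positive naturals summing to `N`. -/
def IsPartition (N : ℕ) (l : List ℕ) : Prop :=
  l.Pairwise (· ≥ ·) ∧ (∀ p ∈ l, 0 < p) ∧ l.sum = N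

/-- Dominance order on partitions: `Dom p q` means `p ⪯ q`,
i.e. every initial partial sum of `p` is at most that of `q`. -/
def Dom (p q : List ℕ) : Prop :=
  ∀ j : ℕ, (p.take j).sum ≤ (q.take j).sum

/-- The height `h_d(s) = #{j : d_j ≥ s}`. -/
def height (l : List ℕ) (s : ℕ) : ℕ :=
  (l.filter (fun p => decide (s ≤ p))).length

/-- Membership in `P_ε(N)`: every part congruent to `ε` mod 2 occurs with even multiplicity. -/
def PEps (e : ℕ) (l : List ℕ) : Prop :=
  ∀ s ∈ l, s % 2 = e % 2 → Even (l.count s)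

/-- Membership in `P_{ε,ε'}(N)`: lies in `P_ε` and `h_d(s) ≡ ε'  (mod 2)` for every integer
`s ≥ 0` with `s ≡ ε (mod 2)` which is either `0` or a part of `d`. -/
def PEpsEps (e e' : ℕ) (l : List ℕ) : Prop :=
  PEps e l ∧
    ∀ s : ℕ, s % 2 = e % 2 → (s = 0 ∨ s ∈ l) → height l s % 2 = e' % 2

/-- `d⁺ = [d₁ + 1, d₂, …, d_k]`. -/
def dplus : List ℕ → List ℕ
  | [] => []
  | a :: rest => (a + 1) :: rest

/-- `d⁻ = [d₁, …, d_{k−1}, d_k − 1]`, the last entry removed if `d_k = 1`. -/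
def dminus (l : List ℕ) : List ℕ :=
  (l.dropLast ++ [l.getLastD 0 - 1]).filter (fun p => decide (0 < p))

/-- `IsCollapse e N l c` says that `c` is the collapse of `l` into `P_e`: the greatest
element, in the dominance order, of the set of partitions of `N` lying in `P_e` and
dominated by `l`. -/
def IsCollapse (e N : ℕ) (l c : List ℕ) : Prop :=
  IsPartition N c ∧ PEps e c ∧ Dom c l ∧
    ∀ m : List ℕ, IsPartition N m → PEps e m → Dom m l → Dom m c

/-- column sums -/
def cs (l : List ℕ) (m : ℕ) : ℕ := (l.map (fun x => min x m)).sum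

lemma cs_nil (m : ℕ) : cs [] m = 0 := rfl

lemma cs_cons (a : ℕ) (t : List ℕ) (m : ℕ) : cs (a :: t) m = min a m + cs t m := by
  simp [cs]

lemma height_nil (s : ℕ) : height [] s = 0 := rfl

lemma height_cons (a : ℕ) (t : List ℕ) (s : ℕ) :
    height (a :: t) s = (if s ≤ a then 1 else 0) + height t s := by
  by_cases h : s ≤ a <;> simp [height, List.filter_cons, h] <;> omega

lemma cs_zero (l : List ℕ) : cs l 0 = 0 := by
  induction l with
  | nil => rfl
  | cons a t ih => rw [cs_cons, ih]; omega

lemma cs_succ (l : List ℕ) (m : ℕ) : cs l (m+1) = cs l m + height l (m+1) := by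
  induction l with
  | nil => rfl
  | cons a t ih =>
    rw [cs_cons, cs_cons, height_cons, ih]
    by_cases h : m + 1 ≤ a <;> simp [h] <;> omega

lemma height_anti (l : List ℕ) {s t : ℕ} (h : s ≤ t) : height l t ≤ height l s := by
  induction l with
  | nil => exact le_refl _
  | cons a r ih => rw [height_cons, height_cons]; by_cases h1 : s ≤ a <;> by_cases h2 : t ≤ a <;>
      simp [h1, h2] <;> omega

lemma height_le_length (l : List ℕ) (s : ℕ) : height l s ≤ l.length :=
  List.length_filter_le _ _

lemma cs_le_sum (l : List ℕ) (m : ℕ) : cs l m ≤ l.sum := by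
  induction l with
  | nil => exact le_refl _
  | cons a t ih => rw [cs_cons]; simp; omega

lemma cs_mono (l : List ℕ) {m m' : ℕ} (h : m ≤ m') : cs l m ≤ cs l m' := by
  induction l with
  | nil => exact le_refl _
  | cons a t ih => rw [cs_cons, cs_cons]; omega

lemma cs_eq_sum_of (l : List ℕ) {m : ℕ} (h : ∀ x ∈ l, x ≤ m) : cs l m = l.sum := by
  induction l with
  | nil => rfl
  | cons a t ih =>
    rw [cs_cons, ih (fun x hx => h x (List.mem_cons_of_mem _ hx))]
    have := h a List.mem_cons_self
    simp
    omega

lemma cs_eq_mul_of (l : List ℕ) {m : ℕ} (h : ∀ x ∈ l, m ≤ x) : cs l m = l.length * m := by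
  induction l with
  | nil => simp [cs_nil]
  | cons a t ih =>
    rw [cs_cons, ih (fun x hx => h x (List.mem_cons_of_mem _ hx))]
    have := h a List.mem_cons_self
    simp [Nat.succ_mul]
    omega

lemma cs_le_mul (l : List ℕ) (m : ℕ) : cs l m ≤ l.length * m := by
  induction l with
  | nil => simp [cs_nil]
  | cons a t ih => rw [cs_cons]; simp [Nat.succ_mul]; omega

lemma cs_append (a b : List ℕ) (m : ℕ) : cs (a ++ b) m = cs a m + cs b m := by
  simp [cs]

lemma le_sum_of_mem {l : List ℕ} {x : ℕ} (h : x ∈ l) : x ≤ l.sum := by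
  induction l with
  | nil => simp at h
  | cons a t ih =>
    rcases List.mem_cons.1 h with h | h
    · simp [h]
    · have := ih h; simp; omega

lemma length_le_sum {l : List ℕ} (h : ∀ x ∈ l, 0 < x) : l.length ≤ l.sum := by
  induction l with
  | nil => simp
  | cons a t ih =>
    have h1 := h a List.mem_cons_self
    have h2 := ih (fun x hx => h x (List.mem_cons_of_mem _ hx))
    simp
    omega

lemma height_count (l : List ℕ) (s : ℕ) : height l s = l.count s + height l (s+1) := by
  induction l with
  | nil => rfl
  | cons a t ih =>
    rw [height_cons, height_cons, List.count_cons, ih]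
    by_cases h1 : s ≤ a <;> by_cases h2 : s + 1 ≤ a <;> by_cases h3 : a = s <;>
      simp [h1, h2, h3] <;> omega

lemma sorted_take_drop (l : List ℕ) (hs : l.Pairwise (· ≥ ·)) (m : ℕ) :
    (∀ x ∈ l.take (height l m), m ≤ x) ∧ (∀ x ∈ l.drop (height l m), x < m) := by
  induction l with
  | nil => simp
  | cons a t ih =>
    rcases List.pairwise_cons.1 hs with ⟨ha, ht⟩
    by_cases h : m ≤ a
    · have hh : height (a :: t) m = height t m + 1 := by rw [height_cons]; simp [h]; omega
      rw [hh]
      simp only [List.take_succ_cons, List.drop_succ_cons]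
      obtain ⟨ih1, ih2⟩ := ih ht
      exact ⟨fun x hx => by rcases List.mem_cons.1 hx with h' | h' <;>
        [exact h' ▸ h; exact ih1 x h'], ih2⟩
    · have hh : height (a :: t) m = 0 := by
        have : ∀ x ∈ a :: t, ¬ (m ≤ x) := by
          intro x hx
          rcases List.mem_cons.1 hx with h' | h'
          · omega
          · have := ha x h'; omega
        simp only [height]
        rw [List.filter_eq_nil_iff.2 (fun x hx => by simpa using this x hx)]
        rfl
      rw [hh]
      constructor
      · simp
      · intro x hx
        simp at hx
        rcases hx with h' | h'
        · omega
        · have := ha x h'; omega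

lemma sorted_take_drop' (l : List ℕ) (hs : l.Pairwise (· ≥ ·)) (k : ℕ) (hk : k < l.length) :
    (∀ x ∈ l.take k, l[k] ≤ x) ∧ (∀ x ∈ l.drop k, x ≤ l[k]) := by
  induction l generalizing k with
  | nil => simp at hk
  | cons a t ih =>
    rcases List.pairwise_cons.1 hs with ⟨ha, ht⟩
    cases k with
    | zero =>
      refine ⟨by simp, fun x hx => ?_⟩
      simp only [List.drop_zero] at hx
      rcases List.mem_cons.1 hx with h' | h'
      · simp [h']
      · simpa using ha x h'
    | succ k =>
      have hk' : k < t.length := by simpa using hk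
      obtain ⟨ih1, ih2⟩ := ih ht k hk'
      have hg : (a :: t)[k+1] = t[k] := rfl
      rw [hg]
      constructor
      · intro x hx
        simp only [List.take_succ_cons] at hx
        rcases List.mem_cons.1 hx with h' | h'
        · subst h'; exact ha _ (List.getElem_mem hk')
        · exact ih1 x h'
      · intro x hx
        simp only [List.drop_succ_cons] at hx
        exact ih2 x hx

/-- rectangle bound (a) -/
lemma rect_le (p : List ℕ) (k m : ℕ) : (p.take k).sum + cs p m ≤ k * m + p.sum := by
  have hsplit : p = p.take k ++ p.drop k := (List.take_append_drop k p).symm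
  have h1 : cs p m = cs (p.take k) m + cs (p.drop k) m := by
    conv_lhs => rw [hsplit]
    exact cs_append _ _ _
  have h2 : cs (p.take k) m ≤ k * m := by
    calc cs (p.take k) m ≤ (p.take k).length * m := cs_le_mul _ _
    _ ≤ k * m := Nat.mul_le_mul_right _ (by simp)
  have h3 : cs (p.drop k) m ≤ (p.drop k).sum := cs_le_sum _ _
  have h4 : (p.take k).sum + (p.drop k).sum = p.sum := by
    conv_rhs => rw [hsplit]
    exact (List.sum_append).symm
  omega

/-- rectangle equality (b'): choose k = height p m -/
lemma rect_ge_m (p : List ℕ) (hs : p.Pairwise (· ≥ ·)) (m : ℕ) :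
    ∃ k, k * m + p.sum ≤ (p.take k).sum + cs p m := by
  refine ⟨height p m, ?_⟩
  obtain ⟨h1, h2⟩ := sorted_take_drop p hs m
  set k := height p m with hk
  have hlen : (p.take k).length = k := by
    simp [List.length_take]
    exact height_le_length _ _
  have e1 : cs (p.take k) m = k * m := by rw [cs_eq_mul_of _ h1, hlen]
  have e2 : cs (p.drop k) m = (p.drop k).sum := cs_eq_sum_of _ (fun x hx => le_of_lt (h2 x hx))
  have h3 : cs p m = cs (p.take k) m + cs (p.drop k) m := by
    conv_lhs => rw [(List.take_append_drop k p).symm]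
    exact cs_append _ _ _
  have h4 : (p.take k).sum + (p.drop k).sum = p.sum := by
    conv_rhs => rw [(List.take_append_drop k p).symm]
    exact (List.sum_append).symm
  omega

/-- rectangle equality (b): for each k, a good m -/
lemma rect_ge_k (p : List ℕ) (hs : p.Pairwise (· ≥ ·)) (k : ℕ) :
    ∃ m, k * m + p.sum ≤ (p.take k).sum + cs p m := by
  by_cases hk : k < p.length
  · refine ⟨p[k], ?_⟩
    obtain ⟨h1, h2⟩ := sorted_take_drop' p hs k hk
    have hlen : (p.take k).length = k := by simp [List.length_take]; omega
    have e1 : cs (p.take k) p[k] = k * p[k] := by rw [cs_eq_mul_of _ h1, hlen]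
    have e2 : cs (p.drop k) p[k] = (p.drop k).sum := cs_eq_sum_of _ h2
    have h3 : cs p p[k] = cs (p.take k) p[k] + cs (p.drop k) p[k] := by
      have := cs_append (p.take k) (p.drop k) p[k]
      rwa [List.take_append_drop] at this
    have h4 : (p.take k).sum + (p.drop k).sum = p.sum := by
      conv_rhs => rw [(List.take_append_drop k p).symm]
      exact (List.sum_append).symm
    omega
  · refine ⟨0, ?_⟩
    rw [List.take_of_length_le (by omega)]
    simp [cs_zero]

/-- dominance transfer: Dom p q iff column sums reversed -/
lemma dom_iff_cs {N : ℕ} {p q : List ℕ} (hp : IsPartition N p) (hq : IsPartition N q) :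
    Dom p q ↔ ∀ j, cs q j ≤ cs p j := by
  constructor
  · intro hdom j
    obtain ⟨k, hk⟩ := rect_ge_m p hp.1 j
    have ha := rect_le q k j
    have := hdom k
    rw [hp.2.2] at hk
    rw [hq.2.2] at ha
    omega
  · intro hcs k
    obtain ⟨m, hm⟩ := rect_ge_k q hq.1 k
    have ha := rect_le p k m
    have := hcs m
    rw [hq.2.2] at hm
    rw [hp.2.2] at ha
    omega

/-- positive lists with the same partial sums are equal -/
lemma ext_partial_sums : ∀ (p q : List ℕ), (∀ x ∈ p, 0 < x) → (∀ x ∈ q, 0 < x) →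
    (∀ j, (p.take j).sum = (q.take j).sum) → p = q := by
  intro p
  induction p with
  | nil =>
    intro q _ hq h
    cases q with
    | nil => rfl
    | cons b t =>
      have := h 1
      have := hq b List.mem_cons_self
      simp at this ⊢
      simp [List.take] at *
      omega
  | cons a s ih =>
    intro q hp hq h
    cases q with
    | nil =>
      have := h 1
      have := hp a List.mem_cons_self
      simp [List.take] at *
      omega
    | cons b t =>
      have hab : a = b := by have := h 1; simpa [List.take] using this
      have htails : s = t := by
        refine ih t (fun x hx => hp x (List.mem_cons_of_mem _ hx))
          (fun x hx => hq x (List.mem_cons_of_mem _ hx)) (fun j => ?_)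
        have := h (j + 1)
        simp [List.take, hab] at this
        omega
      rw [hab, htails]

lemma cs_chain (p : List ℕ) (t : ℕ) :
    cs p (t + 2) = cs p t + height p (t + 1) + height p (t + 2) := by
  have h1 := cs_succ p t
  have h2 := cs_succ p (t + 1)
  rw [show t + 1 + 1 = t + 2 by omega] at h2
  omega

lemma peps_iff_cs {e N : ℕ} (he : e = 0 ∨ e = 1) {p : List ℕ} (hp : IsPartition N p) :
    PEps e p ↔ ∀ j, j % 2 ≠ e % 2 → cs p j % 2 = N % 2 := by
  constructor
  · intro hP j hj
    have key : ∀ t, cs p (j + 2 * t) % 2 = cs p j % 2 := by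
      intro t
      induction t with
      | zero => rfl
      | succ t iht =>
        have hchain := cs_chain p (j + 2 * t)
        have hs : (j + 2 * t + 1) % 2 = e % 2 := by omega
        have hcount : Even (p.count (j + 2 * t + 1)) := by
          by_cases hmem : (j + 2 * t + 1) ∈ p
          · exact hP _ hmem hs
          · rw [List.count_eq_zero.2 hmem]; exact Even.zero
        have hhc := height_count p (j + 2 * t + 1)
        rw [show j + 2 * t + 1 + 1 = j + 2 * t + 2 by omega] at hhc
        obtain ⟨r, hr⟩ := hcount
        rw [show j + 2 * (t + 1) = j + 2 * t + 2 by omega]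
        omega
    have hbig : cs p (j + 2 * N) = N := by
      rw [cs_eq_sum_of p (fun x hx => ?_), hp.2.2]
      have hx1 : x ≤ p.sum := le_sum_of_mem hx
      rw [hp.2.2] at hx1
      omega
    have := key N
    omega
  · intro h s hs hsmod
    have hpos : 1 ≤ s := hp.2.1 s hs
    obtain ⟨t, rfl⟩ : ∃ t, s = t + 1 := ⟨s - 1, by omega⟩
    have h1 : cs p (t + 2) % 2 = N % 2 := h (t + 2) (by omega)
    have h2 : cs p t % 2 = N % 2 := h t (by omega)
    have hchain := cs_chain p t
    have hhc := height_count p (t + 1)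
    rw [show t + 1 + 1 = t + 2 by omega] at hhc
    rw [Nat.even_iff]
    omega

section Join

variable (N : ℕ) (p q : List ℕ)

/-- min of the two column-sum functions -/
def gmin (j : ℕ) : ℕ := min (cs p j) (cs q j)

/-- increments of gmin: the height function of the join -/
def fh (j : ℕ) : ℕ := gmin p q (j + 1) - gmin p q j

/-- parts of the join -/
def cnt (i : ℕ) : ℕ := ((Finset.range N).filter (fun j => i + 1 ≤ fh p q j)).card

/-- the join of two partitions -/
def joinL : List ℕ := ((List.range N).map (cnt N p q)).filter (fun x => decide (0 < x))

lemma gmin_zero : gmin p q 0 = 0 := by simp [gmin, cs_zero]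

lemma gmin_mono {j j' : ℕ} (h : j ≤ j') : gmin p q j ≤ gmin p q j' := by
  have := cs_mono p h
  have := cs_mono q h
  simp only [gmin]
  omega

lemma gmin_succ (j : ℕ) : gmin p q (j + 1) = gmin p q j + fh p q j := by
  have := gmin_mono p q (show j ≤ j + 1 by omega)
  simp only [fh]
  omega

lemma fh_succ_le (j : ℕ) : fh p q (j + 1) ≤ fh p q j := by
  have h1 := cs_succ p j
  have h2 := cs_succ p (j + 1)
  have h3 := cs_succ q j
  have h4 := cs_succ q (j + 1)
  have h5 := height_anti p (show j + 1 ≤ j + 2 by omega)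
  have h6 := height_anti q (show j + 1 ≤ j + 2 by omega)
  rw [show j + 1 + 1 = j + 2 by omega] at h2 h4
  simp only [fh, gmin] at *
  rw [show j + 1 + 1 = j + 2 by omega]
  omega

lemma fh_anti : ∀ {i j : ℕ}, i ≤ j → fh p q j ≤ fh p q i := by
  intro i j h
  exact antitone_nat_of_succ_le (fh_succ_le p q) h

variable {N p q}

lemma cs_all {N : ℕ} (l : List ℕ) (h : IsPartition N l) {j : ℕ} (hj : N ≤ j) : cs l j = N := by
  rw [cs_eq_sum_of l (fun x hx => ?_), h.2.2]
  have := le_sum_of_mem hx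
  rw [h.2.2] at this
  omega

lemma gmin_all (hp : IsPartition N p) (hq : IsPartition N q) {j : ℕ} (hj : N ≤ j) :
    gmin p q j = N := by
  simp [gmin, cs_all p hp hj, cs_all q hq hj]

lemma fh_le (hp : IsPartition N p) (j : ℕ) : fh p q j ≤ N := by
  have h1 : gmin p q (j + 1) ≤ N := by
    have := cs_le_sum p (j + 1)
    rw [hp.2.2] at this
    simp only [gmin]
    omega
  simp only [fh]
  omega

end Join

lemma list_map_range_sum (c : ℕ → ℕ) : ∀ n, ((List.range n).map c).sum = ∑ i ∈ Finset.range n, c i := by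
  intro n
  induction n with
  | zero => rfl
  | succ n ih => rw [List.range_succ, Finset.sum_range_succ, List.map_append, List.sum_append, ih]; simp

lemma sum_ite_min (K : ℕ) : ∀ n, (∑ i ∈ Finset.range n, if i + 1 ≤ K then 1 else 0) = min K n := by
  intro n
  induction n with
  | zero => simp
  | succ n ih => rw [Finset.sum_range_succ, ih]; by_cases h : n + 1 ≤ K <;> simp [h] <;> omega

lemma sum_filter_pos (l : List ℕ) : (l.filter (fun x => decide (0 < x))).sum = l.sum := by
  induction l with
  | nil => rfl
  | cons a t ih => by_cases h : 0 < a <;> simp [List.filter_cons, h, ih] <;> omega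

lemma height_filter_pos (l : List ℕ) {s : ℕ} (hs : 1 ≤ s) :
    height (l.filter (fun x => decide (0 < x))) s = height l s := by
  induction l with
  | nil => rfl
  | cons a t ih =>
    by_cases h : 0 < a
    · simp only [List.filter_cons, decide_eq_true_eq, if_pos h]
      rw [height_cons, height_cons, ih]
    · have ha : a = 0 := by omega
      simp only [List.filter_cons, decide_eq_true_eq, if_neg h]
      rw [height_cons, ih, if_neg (by omega)]
      omega

lemma height_map_range (c : ℕ → ℕ) (s : ℕ) : ∀ n,
    height ((List.range n).map c) s = ((Finset.range n).filter (fun i => s ≤ c i)).card := by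
  intro n
  induction n with
  | zero => rfl
  | succ n ih =>
    rw [List.range_succ, List.map_append, Finset.range_add_one]
    simp only [height, List.filter_append, List.length_append] at *
    by_cases h : s ≤ c n
    · rw [Finset.filter_insert, if_pos h, Finset.card_insert_of_notMem (by simp)]
      simp [List.filter_cons, h, ih]
    · rw [Finset.filter_insert, if_neg h]
      simp [List.filter_cons, h, ih]

lemma sum_fh_eq (p q : List ℕ) : ∀ n, (∑ j ∈ Finset.range n, fh p q j) = gmin p q n := by
  intro n
  induction n with
  | zero => simp [gmin_zero]
  | succ n ih => rw [Finset.sum_range_succ, ih, gmin_succ]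

section JoinMain

variable {N : ℕ} {p q : List ℕ} (hp : IsPartition N p) (hq : IsPartition N q)

include hp hq

lemma joinL_sum : (joinL N p q).sum = N := by
  rw [joinL, sum_filter_pos, list_map_range_sum]
  have h1 : ∀ i ∈ Finset.range N, cnt N p q i = ∑ j ∈ Finset.range N, if i + 1 ≤ fh p q j then 1 else 0 := by
    intro i _
    rw [cnt, Finset.card_filter]
  rw [Finset.sum_congr rfl h1, Finset.sum_comm]
  have h2 : ∀ j ∈ Finset.range N, (∑ i ∈ Finset.range N, if i + 1 ≤ fh p q j then 1 else 0) = fh p q j := by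
    intro j _
    rw [sum_ite_min]
    have := fh_le (q := q) hp j
    omega
  rw [Finset.sum_congr rfl h2, sum_fh_eq]
  exact gmin_all hp hq (le_refl N)

lemma joinL_pos : ∀ x ∈ joinL N p q, 0 < x := by
  intro x hx
  have := List.of_mem_filter hx
  simpa using this

lemma joinL_sorted : (joinL N p q).Pairwise (· ≥ ·) := by
  apply List.Pairwise.filter
  have hanti : ∀ a b : ℕ, a < b → cnt N p q b ≤ cnt N p q a := by
    intro a b hab
    apply Finset.card_le_card
    intro j hj
    simp only [Finset.mem_filter, Finset.mem_range] at *
    exact ⟨hj.1, by omega⟩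
  have := List.pairwise_lt_range (n := N)
  exact List.Pairwise.map _ (fun {a b} h => hanti a b h) this

lemma joinL_height {s : ℕ} (h1 : 1 ≤ s) (h2 : s ≤ N) :
    height (joinL N p q) s = fh p q (s - 1) := by
  rw [joinL, height_filter_pos _ h1, height_map_range]
  have key : ∀ i, i ∈ Finset.range N → (s ≤ cnt N p q i ↔ i + 1 ≤ fh p q (s - 1)) := by
    intro i _
    constructor
    · intro hcnt
      by_contra hcon
      have hsub : (Finset.range N).filter (fun j => i + 1 ≤ fh p q j) ⊆ Finset.range (s - 1) := by
        intro j hj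
        simp only [Finset.mem_filter, Finset.mem_range] at *
        by_contra hj2
        have : fh p q j ≤ fh p q (s - 1) := fh_anti p q (by omega)
        omega
      have := Finset.card_le_card hsub
      rw [Finset.card_range] at this
      rw [cnt] at hcnt
      omega
    · intro hf
      have hsub : Finset.range s ⊆ (Finset.range N).filter (fun j => i + 1 ≤ fh p q j) := by
        intro j hj
        simp only [Finset.mem_filter, Finset.mem_range] at *
        constructor
        · omega
        · have : fh p q (s - 1) ≤ fh p q j := fh_anti p q (by omega)
          omega
      have := Finset.card_le_card hsub
      rw [Finset.card_range, cnt] at *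
      omega
  rw [Finset.filter_congr key, Finset.card_filter, sum_ite_min]
  have := fh_le (q := q) hp (s - 1)
  omega

lemma joinL_cs : ∀ m, cs (joinL N p q) m = gmin p q m := by
  have hle : ∀ m, m ≤ N → cs (joinL N p q) m = gmin p q m := by
    intro m
    induction m with
    | zero => intro _; rw [cs_zero, gmin_zero]
    | succ m ih =>
      intro hm
      rw [cs_succ, ih (by omega), joinL_height hp hq (by omega) (by omega), gmin_succ]
      simp
  intro m
  by_cases hm : m ≤ N
  · exact hle m hm
  · have h1 : cs (joinL N p q) N ≤ cs (joinL N p q) m := cs_mono _ (by omega)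
    have h2 : cs (joinL N p q) m ≤ (joinL N p q).sum := cs_le_sum _ _
    have h3 : (joinL N p q).sum = N := joinL_sum hp hq
    have h4 : cs (joinL N p q) N = N := by rw [hle N (le_refl N)]; exact gmin_all hp hq (le_refl N)
    have h5 : gmin p q m = N := gmin_all hp hq (by omega)
    omega

lemma joinL_partition : IsPartition N (joinL N p q) :=
  ⟨joinL_sorted hp hq, joinL_pos hp hq, joinL_sum hp hq⟩

end JoinMain

lemma take_sum_le (l : List ℕ) (j : ℕ) : (l.take j).sum ≤ l.sum := by
  conv_rhs => rw [← List.take_append_drop j l]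
  rw [List.sum_append]
  omega

lemma replicate_sorted : ∀ n : ℕ, (List.replicate n (1:ℕ)).Pairwise (· ≥ ·) := by
  intro n
  induction n with
  | zero => simp
  | succ n ih =>
    rw [List.replicate_succ, List.pairwise_cons]
    exact ⟨fun b hb => by rw [List.eq_of_mem_replicate hb], ih⟩


/-- For `e ∈ {0,1}` and `N` a natural number, even if `e = 1`: for every partition `d` of `N`,
the set `{μ ∈ P_e(N) : μ ⪯ d}` is nonempty and possesses a (unique) greatest element with
respect to the dominance order. -/
theorem collapse_exists_unique (e : ℕ) (he : e = 0 ∨ e = 1) (N : ℕ) (hN : e = 1 → Even N)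
    (d : List ℕ) (hd : IsPartition N d) :
    (∃ c : List ℕ, IsPartition N c ∧ PEps e c ∧ Dom c d) ∧
      (∃! c : List ℕ, IsCollapse e N d c) := by
  classical
  -- the minimal element of the set
  have hrep : IsPartition N (List.replicate N 1) ∧ PEps e (List.replicate N 1) ∧
      Dom (List.replicate N 1) d := by
    refine ⟨⟨replicate_sorted N, fun x hx => by rw [List.eq_of_mem_replicate hx]; omega, by simp⟩,
      ?_, ?_⟩
    · intro s hs hsmod
      rw [List.eq_of_mem_replicate hs] at hsmod ⊢
      have he1 : e = 1 := by omega
      have hNe := hN he1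
      rw [List.count_replicate_self]
      exact hNe
    · intro j
      rw [List.take_replicate]
      simp only [List.sum_replicate, smul_eq_mul, mul_one]
      by_cases hj : j ≤ d.length
      · have h1 : (d.take j).length = j := by simp [List.length_take]; omega
        have h2 := length_le_sum (l := d.take j) (fun x hx => hd.2.1 x (List.mem_of_mem_take hx))
        omega
      · rw [List.take_of_length_le (by omega), hd.2.2]
        omega
  -- the functional we maximize
  set F : List ℕ → ℕ := fun m => ∑ j ∈ Finset.range (N+1), (m.take j).sum with hF
  set T : Set ℕ := {n | ∃ m, (IsPartition N m ∧ PEps e m ∧ Dom m d) ∧ F m = n} with hT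
  have hTne : T.Nonempty := ⟨F (List.replicate N 1), List.replicate N 1, hrep, rfl⟩
  have hTb : BddAbove T := by
    refine ⟨(N+1) * N, fun n hn => ?_⟩
    obtain ⟨m, hm, rfl⟩ := hn
    calc F m ≤ ∑ j ∈ Finset.range (N+1), N := by
          apply Finset.sum_le_sum
          intro j _
          have := take_sum_le m j
          rw [hm.1.2.2] at this
          exact this
    _ = (N+1) * N := by simp [Finset.sum_const, Finset.card_range]
  obtain ⟨m₀, hm₀, hFm₀⟩ : ∃ m, (IsPartition N m ∧ PEps e m ∧ Dom m d) ∧ F m = sSup T :=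
    Nat.sSup_mem hTne hTb
  have hmax : ∀ m, (IsPartition N m ∧ PEps e m ∧ Dom m d) → F m ≤ F m₀ := by
    intro m hm
    rw [hFm₀]
    exact le_csSup hTb ⟨m, hm, rfl⟩
  -- m₀ is the greatest element
  have hgreat : ∀ μ, IsPartition N μ → PEps e μ → Dom μ d → Dom μ m₀ := by
    intro μ h1 h2 h3
    set J := joinL N μ m₀ with hJ
    have hJpart : IsPartition N J := joinL_partition h1 hm₀.1
    have hJcs : ∀ m, cs J m = min (cs μ m) (cs m₀ m) := fun m => joinL_cs h1 hm₀.1 m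
    have hJpe : PEps e J := by
      rw [peps_iff_cs he hJpart]
      intro j hj
      have a1 := (peps_iff_cs he h1).1 h2 j hj
      have a2 := (peps_iff_cs he hm₀.1).1 hm₀.2.1 j hj
      rw [hJcs]
      omega
    have hJd : Dom J d := by
      rw [dom_iff_cs hJpart hd]
      intro j
      have a1 := (dom_iff_cs h1 hd).1 h3 j
      have a2 := (dom_iff_cs hm₀.1 hd).1 hm₀.2.2 j
      rw [hJcs]
      omega
    have hm₀J : Dom m₀ J := by
      rw [dom_iff_cs hm₀.1 hJpart]
      intro j
      rw [hJcs]
      omega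
    have hμJ : Dom μ J := by
      rw [dom_iff_cs h1 hJpart]
      intro j
      rw [hJcs]
      omega
    have hFJle : F J ≤ F m₀ := hmax J ⟨hJpart, hJpe, hJd⟩
    have hFle : F m₀ ≤ F J := Finset.sum_le_sum (fun j _ => hm₀J j)
    have hEq : ∀ j ∈ Finset.range (N+1), (m₀.take j).sum = (J.take j).sum := by
      intro j hj
      by_contra hne
      have hlt : (m₀.take j).sum < (J.take j).sum := lt_of_le_of_ne (hm₀J j) hne
      have := Finset.sum_lt_sum (fun i (_ : i ∈ Finset.range (N+1)) => hm₀J i) ⟨j, hj, hlt⟩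
      have e1 : F J = ∑ i ∈ Finset.range (N+1), (J.take i).sum := rfl
      have e2 : F m₀ = ∑ i ∈ Finset.range (N+1), (m₀.take i).sum := rfl
      omega
    have hAll : ∀ j, (m₀.take j).sum = (J.take j).sum := by
      intro j
      by_cases hj : j ≤ N
      · exact hEq j (Finset.mem_range.2 (by omega))
      · have l1 : m₀.length ≤ N := by
          have := length_le_sum hm₀.1.2.1
          rw [hm₀.1.2.2] at this
          exact this
        have l2 : J.length ≤ N := by
          have := length_le_sum hJpart.2.1
          rw [hJpart.2.2] at this
          exact this
        rw [List.take_of_length_le (by omega), List.take_of_length_le (by omega),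
          hm₀.1.2.2, hJpart.2.2]
    have hext : m₀ = J := ext_partial_sums m₀ J hm₀.1.2.1 hJpart.2.1 hAll
    rw [hext]
    exact hμJ
  constructor
  · exact ⟨List.replicate N 1, hrep⟩
  · refine ⟨m₀, ⟨hm₀.1, hm₀.2.1, hm₀.2.2, fun m h1 h2 h3 => hgreat m h1 h2 h3⟩, ?_⟩
    intro c hc
    have h1 : Dom c m₀ := hgreat c hc.1 hc.2.1 hc.2.2.1
    have h2 : Dom m₀ c := hc.2.2.2 m₀ hm₀.1 hm₀.2.1 hm₀.2.2
    exact ext_partial_sums c m₀ hc.1.2.1 hm₀.1.2.1 (fun j => le_antisymm (h1 j) (h2 j))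
end

section
/- The maps f_BC : P^sp_B(2n+1) → P^sp_C(2n), d ↦ (d⁻)_C, and f_CB : P^sp_C(2n) → P^sp_B(2n+1), d ↦ (d⁺)_B, are mutually inverse bijections: f_CB(f_BC(d)) = d for every d ∈ P^sp_B(2n+1), and f_BC(f_CB(d)) = d for every d ∈ P^sp_C(2n). -/
namespace SpBC

def pS (l : List ℕ) (j : ℕ) : ℕ := (l.take j).sum

def pt (l : List ℕ) (i : ℕ) : ℕ := l.getD (i - 1) 0

@[simp] lemma pS_zero (l : List ℕ) : pS l 0 = 0 := rfl

@[simp] lemma pS_nil (j : ℕ) : pS [] j = 0 := by simp [pS]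

@[simp] lemma pt_nil (i : ℕ) : pt [] i = 0 := by simp [pt]

lemma pt_cons_one (a : ℕ) (t : List ℕ) : pt (a :: t) 1 = a := rfl

lemma pt_cons_succ (a : ℕ) (t : List ℕ) (j : ℕ) (hj : 1 ≤ j) :
    pt (a :: t) (j + 1) = pt t j := by
  unfold pt
  obtain ⟨k, rfl⟩ := Nat.exists_eq_add_of_le hj
  simp [Nat.add_comm 1 k]

lemma pS_succ (l : List ℕ) (i : ℕ) : pS l (i + 1) = pS l i + pt l (i + 1) := by
  induction l generalizing i with
  | nil => simp
  | cons a t ih =>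
    cases i with
    | zero => simp [pS, pt]
    | succ j =>
      have h1 : pS (a :: t) (j + 1 + 1) = a + pS t (j + 1) := by simp [pS]
      have h2 : pS (a :: t) (j + 1) = a + pS t j := by simp [pS]
      rw [h1, h2, pt_cons_succ a t (j+1) (by omega), ih, Nat.add_assoc]

lemma pS_mono (l : List ℕ) {i j : ℕ} (h : i ≤ j) : pS l i ≤ pS l j := by
  induction j with
  | zero => simp_all
  | succ k ih =>
    rcases Nat.lt_or_ge i (k+1) with h'|h'
    · exact le_trans (ih (by omega)) (by rw [pS_succ]; omega)
    · have : i = k + 1 := by omega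
      subst this; exact le_refl _

lemma pS_le_sum (l : List ℕ) (j : ℕ) : pS l j ≤ l.sum := by
  have := List.sum_take_add_sum_drop l j
  unfold pS; omega

lemma pS_eq_sum_of_le (l : List ℕ) {j : ℕ} (h : l.length ≤ j) : pS l j = l.sum := by
  unfold pS; rw [List.take_of_length_le h]

lemma pt_zero_of_lt (l : List ℕ) {i : ℕ} (h : l.length < i) : pt l i = 0 := by
  unfold pt; exact List.getD_eq_default _ _ (by omega)

lemma pt_pos (l : List ℕ) (hp : ∀ p ∈ l, 0 < p) {i : ℕ} (h1 : 1 ≤ i)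
    (h2 : i ≤ l.length) : 0 < pt l i := by
  unfold pt
  rw [List.getD_eq_getElem l 0 (by omega)]
  exact hp _ (List.getElem_mem _)

lemma pt_mem (l : List ℕ) {i : ℕ} (h1 : 1 ≤ i) (h2 : 0 < pt l i) : pt l i ∈ l := by
  unfold pt at *
  by_cases h : i - 1 < l.length
  · rw [List.getD_eq_getElem l 0 h]; exact List.getElem_mem _
  · rw [List.getD_eq_default _ _ (by omega)] at h2; omega

lemma le_len_of_pt_pos (l : List ℕ) {i : ℕ} (h2 : 0 < pt l i) : i ≤ l.length := by
  by_contra h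
  rw [pt_zero_of_lt l (by omega)] at h2; omega

lemma pt_anti (l : List ℕ) (hs : l.Pairwise (· ≥ ·)) {i j : ℕ} (h1 : 1 ≤ i)
    (h : i ≤ j) : pt l j ≤ pt l i := by
  by_cases hj : l.length < j
  · rw [pt_zero_of_lt l hj]; omega
  · push_neg at hj
    have hi : i - 1 < l.length := by omega
    have hjj : j - 1 < l.length := by omega
    unfold pt
    rw [List.getD_eq_getElem l 0 hi, List.getD_eq_getElem l 0 hjj]
    rcases Nat.lt_or_ge (i-1) (j-1) with h'|h'
    · exact List.pairwise_iff_getElem.mp hs _ _ _ _ h'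
    · have : i - 1 = j - 1 := by omega
      simp [this]

lemma height_countP (l : List ℕ) (s : ℕ) :
    height l s = l.countP (fun p => decide (s ≤ p)) := by
  simp [height, List.countP_eq_length_filter]

lemma height_pos_iff (l : List ℕ) (s : ℕ) : 0 < height l s ↔ ∃ x ∈ l, s ≤ x := by
  rw [height_countP, List.countP_pos_iff]
  simp

lemma height_cons (a : ℕ) (t : List ℕ) (s : ℕ) :
    height (a :: t) s = (if s ≤ a then 1 else 0) + height t s := by
  rw [height_countP, height_countP, List.countP_cons]
  by_cases h : s ≤ a <;> simp [h] <;> omega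

lemma height_eq_zero (l : List ℕ) (s : ℕ) (h : ∀ x ∈ l, x < s) : height l s = 0 := by
  rw [height_countP, List.countP_eq_zero]
  intro a ha
  simpa using Nat.not_le.mpr (h a ha)

lemma height_split (l : List ℕ) (v : ℕ) :
    height l v = l.count v + height l (v + 1) := by
  induction l with
  | nil => simp [height]
  | cons a t ih =>
    rw [height_cons, height_cons, List.count_cons]
    by_cases h : a = v
    · subst h
      simp only [beq_self_eq_true, if_true, le_refl, if_neg (by omega : ¬ a + 1 ≤ a)]
      omega
    · have hbeq : ¬ ((a == v) = true) := by simp [h]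
      by_cases h2 : v ≤ a
      · have h3 : v + 1 ≤ a := by omega
        simp only [if_pos h2, if_pos h3, if_neg hbeq]
        omega
      · have h3 : ¬ (v + 1 ≤ a) := by omega
        simp only [if_neg h2, if_neg h3, if_neg hbeq]
        omega

lemma height_anti (l : List ℕ) (v : ℕ) : height l (v+1) ≤ height l v := by
  have := height_split l v; omega

/-- Galois connection between parts and heights, for sorted lists. -/
lemma pt_height_galois (l : List ℕ) (hs : l.Pairwise (· ≥ ·)) {i s : ℕ}
    (hi : 1 ≤ i) (hsp : 1 ≤ s) : s ≤ pt l i ↔ i ≤ height l s := by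
  induction l generalizing i with
  | nil => simp [height]; omega
  | cons a t ih =>
    have hst : t.Pairwise (· ≥ ·) := hs.of_cons
    have hle : ∀ x ∈ t, x ≤ a := fun x hx => List.rel_of_pairwise_cons hs hx
    rcases Nat.eq_or_lt_of_le hi with h1|h1
    · rw [← h1, pt_cons_one, height_cons]
      constructor
      · intro h; rw [if_pos h]; omega
      · intro h
        by_contra hc
        rw [if_neg hc] at h
        have := (height_pos_iff t s).mp (by omega)
        obtain ⟨x, hx, hsx⟩ := this
        exact hc (le_trans hsx (hle x hx))
    · obtain ⟨j, rfl⟩ : ∃ j, i = j + 1 := ⟨i - 1, by omega⟩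
      have hj : 1 ≤ j := by omega
      rw [pt_cons_succ a t j hj, height_cons]
      by_cases h : s ≤ a
      · rw [if_pos h, ih hst hj]; omega
      · rw [if_neg h]
        have ht0 : height t s = 0 := height_eq_zero t s (fun x hx => by
          have := hle x hx; omega)
        rw [ht0]
        constructor
        · intro hc
          have hm : pt t j ≤ a := by
            rcases Nat.eq_zero_or_pos (pt t j) with h0|h0
            · omega
            · exact hle _ (pt_mem t hj h0)
          omega
        · omega

lemma pt_flat (l : List ℕ) (hs : l.Pairwise (· ≥ ·)) {v i : ℕ} (hv : 1 ≤ v)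
    (h1 : height l (v+1) < i) (h2 : i ≤ height l v) : pt l i = v := by
  have hi : 1 ≤ i := by omega
  have hge : v ≤ pt l i := (pt_height_galois l hs hi hv).mpr h2
  have hlt : ¬ (v + 1 ≤ pt l i) := fun hc =>
    absurd ((pt_height_galois l hs hi (by omega)).mp hc) (by omega)
  omega

lemma flat_sum (l : List ℕ) {a v : ℕ} :
    ∀ k : ℕ, (∀ u, 1 ≤ u → u ≤ k → pt l (a + u) = v) →
      pS l (a + k) = pS l a + k * v := by
  intro k
  induction k with
  | zero => simp
  | succ m ih =>
    intro h
    have : a + (m+1) = (a + m) + 1 := by omega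
    rw [this, pS_succ, ih (fun u h1 h2 => h u h1 (by omega)), ← this,
      h (m+1) (by omega) le_rfl]
    ring

lemma eq_of_pS_eq : ∀ (l₁ l₂ : List ℕ), (∀ p ∈ l₁, 0 < p) → (∀ p ∈ l₂, 0 < p) →
    (∀ j, pS l₁ j = pS l₂ j) → l₁ = l₂ := by
  intro l₁
  induction l₁ with
  | nil =>
    intro l₂ _ hp2 h
    cases l₂ with
    | nil => rfl
    | cons a t =>
      have := h 1
      simp [pS] at this
      have := hp2 a (by simp)
      omega
  | cons a t ih =>
    intro l₂ hp1 hp2 h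
    cases l₂ with
    | nil =>
      have := h 1
      simp [pS] at this
      have := hp1 a (by simp)
      omega
    | cons b u =>
      have h1 := h 1
      simp [pS] at h1
      subst h1
      have : t = u := by
        apply ih u (fun p hp => hp1 p (by simp [hp])) (fun p hp => hp2 p (by simp [hp]))
        intro j
        have := h (j + 1)
        simp only [pS, List.take_succ_cons, List.sum_cons] at this
        unfold pS
        omega
      rw [this]

/-! ### Corner-parity characterization of `PEps` -/

def CornOk (c : ℕ) (l : List ℕ) : Prop :=
  ∀ i, 1 ≤ i → pt l (i+1) < pt l i → (pS l i + c * i) % 2 = 0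

lemma cornOk_nil (c : ℕ) : CornOk c [] := by
  intro i _ h
  simp at h

lemma pt_replicate_append_le {v m : ℕ} {r : List ℕ} {i : ℕ} (h1 : 1 ≤ i) (h2 : i ≤ m) :
    pt (List.replicate m v ++ r) i = v := by
  unfold pt
  rw [List.getD_append _ _ _ _ (by simp; omega)]
  rw [List.getD_eq_getElem _ 0 (by simp; omega)]
  simp

lemma pt_replicate_append_gt {v m : ℕ} {r : List ℕ} {i : ℕ} (h2 : m < i) :
    pt (List.replicate m v ++ r) i = pt r (i - m) := by
  unfold pt
  rw [List.getD_append_right _ _ _ _ (by simp; omega)]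
  congr 1
  simp
  omega

lemma pS_replicate_append {v m : ℕ} {r : List ℕ} (j : ℕ) :
    pS (List.replicate m v ++ r) j = v * min j m + pS r (j - m) := by
  unfold pS
  rw [List.take_append, List.sum_append, List.take_replicate]
  simp [List.sum_replicate, smul_eq_mul, pS, Nat.mul_comm]

lemma cornOk_peel {c v m : ℕ} {r : List ℕ} (hm : 1 ≤ m) (hv : 1 ≤ v)
    (hr : ∀ p ∈ r, p < v) :
    CornOk c (List.replicate m v ++ r) ↔
      ((v * m + c * m) % 2 = 0 ∧ CornOk c r) := by
  have hpt1 : pt r 1 < v := by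
    rcases Nat.eq_zero_or_pos (pt r 1) with h0|h0
    · omega
    · exact hr _ (pt_mem r le_rfl h0)
  constructor
  · intro H
    have hfst : (v * m + c * m) % 2 = 0 := by
      have := H m hm (by
        rw [pt_replicate_append_gt (by omega), pt_replicate_append_le hm le_rfl]
        have e0 : m + 1 - m = 1 := by omega
        rwa [e0])
      rw [pS_replicate_append] at this
      simpa [Nat.min_self] using this
    refine ⟨hfst, ?_⟩
    intro i hi hcorn
    have := H (m + i) (by omega) (by
      rw [pt_replicate_append_gt (by omega), pt_replicate_append_gt (by omega)]
      have e1 : m + i - m = i := by omega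
      have e2 : m + i + 1 - m = i + 1 := by omega
      rw [e1, e2]
      exact hcorn)
    rw [pS_replicate_append] at this
    have e1 : min (m + i) m = m := by omega
    have e2 : m + i - m = i := by omega
    rw [e1, e2] at this
    have hmul : c * (m + i) = c * m + c * i := by ring
    rw [hmul] at this
    omega
  · rintro ⟨hfst, H⟩
    intro i hi hcorn
    rcases Nat.lt_or_ge i m with hlt|hge
    · exfalso
      rw [pt_replicate_append_le hi (by omega),
        pt_replicate_append_le (by omega) (by omega)] at hcorn
      omega
    rcases Nat.eq_or_lt_of_le hge with heq|hgt
    · rw [pS_replicate_append]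
      rw [← heq]
      simp [Nat.min_self, ← heq]
      omega
    · have hi' : 1 ≤ i - m := by omega
      have hcorn' : pt r (i - m + 1) < pt r (i - m) := by
        rw [pt_replicate_append_gt (by omega), pt_replicate_append_gt (by omega)] at hcorn
        have e2 : i + 1 - m = i - m + 1 := by omega
        rwa [e2] at hcorn
      have := H (i - m) hi' hcorn'
      rw [pS_replicate_append]
      have e1 : min i m = m := by omega
      rw [e1]
      have hmul : c * i = c * m + c * (i - m) := by
        have h2 : m + (i - m) = i := by omega
        calc c * i = c * (m + (i - m)) := by rw [h2]
          _ = c * m + c * (i - m) := by ring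
      rw [hmul]
      omega

lemma peps_peel {e v m : ℕ} {r : List ℕ} (hm : 1 ≤ m) (hr : ∀ p ∈ r, p < v) :
    PEps e (List.replicate m v ++ r) ↔ ((v % 2 = e % 2 → Even m) ∧ PEps e r) := by
  have hvr : v ∉ r := fun h => lt_irrefl v (hr v h)
  have hcount : ∀ s, (List.replicate m v ++ r).count s =
      (if s = v then m else 0) + r.count s := by
    intro s
    rw [List.count_append, List.count_replicate]
    by_cases h : s = v
    · subst h; simp
    · simp [h, Ne.symm h]
  have hcvr : r.count v = 0 := List.count_eq_zero.mpr hvr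
  constructor
  · intro H
    constructor
    · intro hpar
      have := H v (by simp [List.mem_append, List.mem_replicate]; omega) hpar
      rw [hcount v, if_pos rfl, hcvr] at this
      simpa using this
    · intro s hs hpar
      have hsv : s ≠ v := fun h => by subst h; exact hvr hs
      have := H s (by simp [List.mem_append]; tauto) hpar
      rwa [hcount s, if_neg hsv, Nat.zero_add] at this
  · rintro ⟨h1, h2⟩
    intro s hs hpar
    rw [hcount s]
    by_cases hsv : s = v
    · subst hsv
      rw [if_pos rfl, hcvr]
      simpa using h1 hpar
    · rw [if_neg hsv, Nat.zero_add]
      apply h2 s _ hpar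
      rcases List.mem_append.mp hs with h|h
      · exact absurd (List.eq_of_mem_replicate h) hsv
      · exact h

lemma run_decomp' : ∀ (tl : List ℕ) (v : ℕ), (v :: tl).Pairwise (· ≥ ·) →
    ∃ m r, 1 ≤ m ∧ v :: tl = List.replicate m v ++ r ∧ r.Pairwise (· ≥ ·) ∧
      (∀ p ∈ r, p < v) ∧ m + r.length = tl.length + 1 := by
  intro tl
  induction tl with
  | nil =>
    intro v _
    exact ⟨1, [], le_rfl, by simp, List.Pairwise.nil, by simp, by simp⟩
  | cons b tl' ih =>
    intro v hs
    have hbv : b ≤ v := List.rel_of_pairwise_cons hs (by simp)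
    by_cases h : b = v
    · subst h
      have hs' : (b :: tl').Pairwise (· ≥ ·) := hs.of_cons
      obtain ⟨m, r, hm, hdec, hrs, hrlt, hlen⟩ := ih b hs'
      refine ⟨m + 1, r, by omega, ?_, hrs, hrlt, ?_⟩
      · rw [List.replicate_succ]
        simp only [List.cons_append]
        rw [← hdec]
      · simp only [List.length_cons]
        omega
    · refine ⟨1, b :: tl', le_rfl, by simp, hs.of_cons, ?_, by simp; omega⟩
      intro p hp
      have hlt : b < v := by omega
      rcases List.mem_cons.mp hp with rfl|hp'
      · omega
      · have := List.rel_of_pairwise_cons hs.of_cons hp'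
        omega

lemma run_decomp {v : ℕ} {tl : List ℕ} (hs : (v :: tl).Pairwise (· ≥ ·)) :
    ∃ m r, 1 ≤ m ∧ v :: tl = List.replicate m v ++ r ∧ r.Pairwise (· ≥ ·) ∧
      (∀ p ∈ r, p < v) ∧ m + r.length = tl.length + 1 :=
  run_decomp' tl v hs

lemma peps_iff_cornOk {e c : ℕ} (hec : e + c = 1) :
    ∀ (n : ℕ) (l : List ℕ), l.length ≤ n → l.Pairwise (· ≥ ·) → (∀ p ∈ l, 0 < p) →
      (PEps e l ↔ CornOk c l) := by
  intro n
  induction n with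
  | zero =>
    intro l hl _ _
    have : l = [] := List.length_eq_zero_iff.mp (by omega)
    subst this
    constructor
    · intro _; exact cornOk_nil c
    · intro _ s hs; simp at hs
  | succ n ih =>
    intro l hl hs hp
    cases l with
    | nil =>
      constructor
      · intro _; exact cornOk_nil c
      · intro _ s hs; simp at hs
    | cons v tl =>
      obtain ⟨m, r, hm, hdec, hrs, hrlt, hlen⟩ := run_decomp hs
      have hv : 1 ≤ v := hp v (by simp)
      have hrp : ∀ p ∈ r, 0 < p := by
        intro p hpmem
        apply hp
        rw [hdec]
        simp [hpmem]
      rw [hdec, cornOk_peel hm hv hrlt, peps_peel hm hrlt,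
        ih r (by simp at hl; omega) hrs hrp]
      have key : (v * m + c * m) % 2 = ((v % 2) * (m % 2) + (c % 2) * (m % 2)) % 2 := by
        conv_lhs => rw [Nat.add_mod, Nat.mul_mod v m 2, Nat.mul_mod c m 2]
        rw [← Nat.add_mod]
      have hpar : (v * m + c * m) % 2 = 0 ↔ (v % 2 = e % 2 → Even m) := by
        rw [key, Nat.even_iff]
        rcases (by omega : (e = 0 ∧ c = 1) ∨ (e = 1 ∧ c = 0)) with ⟨he, hc⟩|⟨he, hc⟩ <;>
          subst he <;> subst hc <;>
          rcases Nat.mod_two_eq_zero_or_one v with hv2|hv2 <;>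
          rcases Nat.mod_two_eq_zero_or_one m with hm2|hm2 <;>
          rw [hv2, hm2] <;> decide
      tauto

/-! ### Witness construction -/

lemma head_le_of_sorted {l : List ℕ} (hs : l.Pairwise (· ≥ ·)) :
    ∀ p ∈ l, p ≤ pt l 1 := by
  cases l with
  | nil => intro p hp; simp at hp
  | cons a t =>
    intro p hp
    rcases List.mem_cons.mp hp with rfl|hp'
    · exact le_rfl
    · exact List.rel_of_pairwise_cons hs hp'

lemma pt_one_lt {r : List ℕ} {v : ℕ} (hr : ∀ p ∈ r, p < v) (hv : 0 < v) :
    pt r 1 < v := by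
  rcases Nat.eq_zero_or_pos (pt r 1) with h0|h0
  · omega
  · exact hr _ (pt_mem r le_rfl h0)

lemma sorted_replicate (m v : ℕ) : (List.replicate m v).Pairwise (· ≥ ·) := by
  induction m with
  | zero => simp
  | succ k ih =>
    rw [List.replicate_succ]
    exact List.pairwise_cons.mpr ⟨fun b hb => le_of_eq (List.eq_of_mem_replicate hb), ih⟩

lemma sorted_replicate_append {v m : ℕ} {l : List ℕ} (hl : l.Pairwise (· ≥ ·))
    (hle : ∀ p ∈ l, p ≤ v) : (List.replicate m v ++ l).Pairwise (· ≥ ·) := by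
  rw [List.pairwise_append]
  refine ⟨sorted_replicate m v, hl, ?_⟩
  intro a ha b hb
  rw [List.eq_of_mem_replicate ha]
  exact hle b hb

lemma sum_replicate_append (v m : ℕ) (l : List ℕ) :
    (List.replicate m v ++ l).sum = v * m + l.sum := by
  simp [List.sum_replicate, smul_eq_mul, Nat.mul_comm]

lemma cornOk_glue {c v m : ℕ} {r : List ℕ}
    (hcond : (v * m + c * m) % 2 = 0) (hr : CornOk c r) :
    CornOk c (List.replicate m v ++ r) := by
  intro i hi hcorn
  rcases Nat.lt_or_ge i m with hlt|hge
  · exfalso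
    rw [pt_replicate_append_le hi (by omega),
      pt_replicate_append_le (by omega) (by omega)] at hcorn
    omega
  rcases Nat.eq_or_lt_of_le hge with heq|hgt
  · subst heq
    rw [pS_replicate_append]
    simp only [Nat.min_self, Nat.sub_self, pS_zero, Nat.add_zero]
    omega
  · have hi' : 1 ≤ i - m := by omega
    have hcorn' : pt r (i - m + 1) < pt r (i - m) := by
      rw [pt_replicate_append_gt (by omega), pt_replicate_append_gt (by omega)] at hcorn
      have e2 : i + 1 - m = i - m + 1 := by omega
      rwa [e2] at hcorn
    have h2 := hr (i - m) hi' hcorn'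
    rw [pS_replicate_append]
    have e1 : min i m = m := by omega
    rw [e1]
    have hmul : c * i = c * m + c * (i - m) := by
      have h3 : m + (i - m) = i := by omega
      calc c * i = c * (m + (i - m)) := by rw [h3]
        _ = c * m + c * (i - m) := by ring
    rw [hmul]
    omega

def KeepP (c : ℕ) (μ ν : List ℕ) : Prop :=
  ν.Pairwise (· ≥ ·) ∧ (∀ p ∈ ν, 0 < p) ∧ ν.sum = μ.sum ∧
  (∀ j, pS ν j ≤ pS μ j ∧ pS μ j ≤ pS ν j + 1) ∧ CornOk c ν ∧
  pt ν 1 ≤ pt μ 1 ∧ (c = 0 → ν.length = μ.length)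

def AddP (c : ℕ) (μ ν : List ℕ) : Prop :=
  ν.Pairwise (· ≥ ·) ∧ (∀ p ∈ ν, 0 < p) ∧ ν.sum = μ.sum + 1 ∧
  (∀ j, pS μ j ≤ pS ν j ∧ pS ν j ≤ pS μ j + 1) ∧ CornOk c ν ∧
  pt ν 1 ≤ pt μ 1 + 1 ∧ (pt ν 1 = pt μ 1 + 1 → (pt μ 1 + c) % 2 = 1) ∧
  (c = 0 → ν.length = μ.length)

lemma witness (c : ℕ) (hc : c ≤ 1) :
    ∀ (n : ℕ) (μ : List ℕ), μ.length ≤ n → μ.Pairwise (· ≥ ·) → (∀ p ∈ μ, 0 < p) →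
      ((c = 0 → Even μ.sum) → ∃ ν, KeepP c μ ν) ∧
      ((c = 0 → Odd μ.sum) → ∃ ν, AddP c μ ν) := by
  have base : ∀ μ : List ℕ, μ = [] →
      ((c = 0 → Even μ.sum) → ∃ ν, KeepP c μ ν) ∧
      ((c = 0 → Odd μ.sum) → ∃ ν, AddP c μ ν) := by
    rintro _ rfl
    constructor
    · intro _
      refine ⟨[], List.Pairwise.nil, by simp, by simp, by simp, cornOk_nil c, le_rfl, fun _ => rfl⟩
    · intro h
      have hc1 : c = 1 := by
        rcases Nat.eq_or_lt_of_le hc with h1|h1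
        · omega
        · exfalso
          have := h (by omega)
          simp [Nat.odd_iff] at this
      refine ⟨[1], ?_, ?_, by simp, ?_, ?_, ?_, ?_, ?_⟩
      · simp
      · intro p hp; simp at hp; omega
      · intro j
        cases j with
        | zero => simp
        | succ k =>
          constructor
          · simp
          · have : pS [1] (k+1) = 1 := by
              have h1 : (1:ℕ) ≤ k + 1 := by omega
              rw [pS_eq_sum_of_le]
              · simp
              · simp
            rw [this]; simp
      · intro i hi hcorn
        have : i = 1 := by
          by_contra hne
          have h2 : 2 ≤ i := by omega
          rw [pt_zero_of_lt [1] (by simp; omega), pt_zero_of_lt [1] (by simp; omega)] at hcorn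
          omega
        subst this
        have h9 : pS [1] 1 = 1 := by simp [pS]
        rw [h9, hc1]
      · show pt [1] 1 ≤ pt [] 1 + 1
        simp [pt]
      · intro _
        show (pt ([] : List ℕ) 1 + c) % 2 = 1
        simp [pt, hc1]
      · intro h0; omega
  intro n
  induction n with
  | zero =>
    intro μ hlen _ _
    exact base μ (List.length_eq_zero_iff.mp (by omega))
  | succ n ih =>
    intro μ hlen hsort hpos
    cases μ with
    | nil => exact base [] rfl
    | cons v tl =>
      obtain ⟨m, r, hm, hdec, hrs, hrlt, hlenr⟩ := run_decomp hsort
      have hv : 0 < v := hpos v (by simp)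
      have hrpos : ∀ p ∈ r, 0 < p := fun p hp => hpos p (by rw [hdec]; simp [hp])
      have hrlen : r.length ≤ n := by
        simp only [List.length_cons] at hlen
        omega
      have ihr := ih r hrlen hrs hrpos
      have hr1 : pt r 1 < v := pt_one_lt hrlt hv
      rw [hdec]
      have hsum : (List.replicate m v ++ r).sum = v * m + r.sum :=
        sum_replicate_append v m r
      have hpt1 : pt (List.replicate m v ++ r) 1 = v := pt_replicate_append_le le_rfl hm
      have hlenL : (List.replicate m v ++ r).length = m + r.length := by simp
      constructor
      · -- Keep mode
        intro hK
        by_cases hpar : (v * m + c * m) % 2 = 0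
        · -- good run
          obtain ⟨ν', h1, h2, h3, h4, h5, h6, h7⟩ := ihr.1 (by
            intro hc0
            have hEμ := hK hc0
            rw [hsum] at hEμ
            subst hc0
            rw [Nat.even_add] at hEμ
            rw [Nat.even_iff]
            have : (v * m) % 2 = 0 := by simpa using hpar
            rw [Nat.even_iff, Nat.even_iff] at hEμ
            omega)
          have hν'le : ∀ p ∈ ν', p ≤ v := fun p hp =>
            le_trans (head_le_of_sorted h1 p hp) (by omega)
          refine ⟨List.replicate m v ++ ν', sorted_replicate_append h1 hν'le, ?_, ?_, ?_, ?_, ?_, ?_⟩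
          · intro p hp
            rcases List.mem_append.mp hp with h|h
            · rw [List.eq_of_mem_replicate h]; exact hv
            · exact h2 p h
          · rw [sum_replicate_append, hsum, h3]
          · intro j
            rw [pS_replicate_append, pS_replicate_append]
            have := h4 (j - m)
            omega
          · exact cornOk_glue hpar h5
          · rw [pt_replicate_append_le le_rfl hm, hpt1]
          · intro hc0
            rw [hlenL]
            simp only [List.length_append, List.length_replicate]
            rw [h7 hc0]
        · -- bad run : v*m + c*m odd, so (v+c) odd and m odd
          have hodd : (v + c) % 2 = 1 ∧ m % 2 = 1 := by
            have h0 : (v * m + c * m) = (v + c) * m := by ring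
            rw [h0] at hpar
            rcases Nat.mod_two_eq_zero_or_one (v + c) with h1|h1 <;>
              rcases Nat.mod_two_eq_zero_or_one m with h2|h2 <;>
              first
                | exact ⟨h1, h2⟩
                | (exfalso; apply hpar; simp [Nat.mul_mod, h1, h2])
          have hv2 : 2 ≤ v := by
            by_contra hv2
            have hv1 : v = 1 := by omega
            have hc0 : c = 0 := by
              rcases (by omega : c = 0 ∨ c = 1) with h|h
              · exact h
              · exfalso; subst h; rw [hv1] at hodd; omega
            have hrnil : r = [] := by
              cases r with
              | nil => rfl
              | cons a t =>
                exfalso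
                have := hrlt a (by simp)
                have := hrpos a (by simp)
                omega
            have hEμ := hK hc0
            rw [hsum, hrnil, hv1] at hEμ
            simp [Nat.even_iff] at hEμ
            omega
          obtain ⟨ν', h1, h2, h3, h4, h5, h6, h6', h7⟩ := ihr.2 (by
            intro hc0
            have hEμ := hK hc0
            rw [hsum] at hEμ
            have hvm : (v * m) % 2 = 1 := by
              subst hc0
              simp at hpar
              omega
            rw [Nat.even_iff] at hEμ
            rw [Nat.odd_iff]
            omega)
          -- head of ν' is at most v - 1
          have hν'head : pt ν' 1 ≤ v - 1 := by
            rcases Nat.eq_or_lt_of_le h6 with heq|hlt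
            · have := h6' heq
              -- pt r 1 + c odd ; but if pt r 1 = v - 1 then pt r 1 + c = v - 1 + c even
              by_contra hcon
              have hptr : pt r 1 = v - 1 := by omega
              rw [hptr] at this
              omega
            · have := hr1
              omega
          have hν'le : ∀ p ∈ ν', p ≤ v - 1 := fun p hp =>
            le_trans (head_le_of_sorted h1 p hp) hν'head
          set ν₂ : List ℕ := (v - 1) :: ν' with hν₂
          have hν₂sorted : ν₂.Pairwise (· ≥ ·) :=
            List.pairwise_cons.mpr ⟨fun b hb => hν'le b hb, h1⟩
          have hν₂le : ∀ p ∈ ν₂, p ≤ v := by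
            intro p hp
            rcases List.mem_cons.mp hp with rfl|hp'
            · omega
            · have := hν'le p hp'; omega
          have hν₂eq : ν₂ = List.replicate 1 (v-1) ++ ν' := by simp [hν₂]
          have hν₂corn : CornOk c ν₂ := by
            rw [hν₂eq]
            apply cornOk_glue _ h5
            have : ((v-1) * 1 + c * 1) = v - 1 + c := by ring
            rw [this]
            omega
          refine ⟨List.replicate (m-1) v ++ ν₂, sorted_replicate_append hν₂sorted hν₂le, ?_, ?_, ?_, ?_, ?_, ?_⟩
          · intro p hp
            rcases List.mem_append.mp hp with h|h
            · rw [List.eq_of_mem_replicate h]; exact hv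
            · rcases List.mem_cons.mp h with rfl|h'
              · omega
              · exact h2 p h'
          · rw [sum_replicate_append, hsum]
            have : ν₂.sum = (v - 1) + ν'.sum := by simp [hν₂]
            rw [this, h3]
            have hm1 : v * (m - 1) + v = v * m := by
              have : m - 1 + 1 = m := by omega
              calc v * (m-1) + v = v * ((m-1)+1) := by ring
                _ = v * m := by rw [this]
            omega
          · intro j
            rw [pS_replicate_append, pS_replicate_append]
            rcases Nat.lt_or_ge j m with hj|hj
            · -- j ≤ m - 1
              have e1 : min j (m-1) = min j m := by omega
              have e2 : pS ν₂ (j - (m-1)) = (v-1) * min (j - (m-1)) 1 + pS ν' (j - (m-1) - 1) := by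
                rw [hν₂eq, pS_replicate_append]
              rcases Nat.lt_or_ge j (m-1) with hj2|hj2
              · have e3 : j - (m-1) = 0 := by omega
                have e4 : j - m = 0 := by omega
                rw [e1, e2, e3, e4]
                simp
              · have e3 : j = m - 1 := by omega
                have e4 : j - (m-1) = 0 := by omega
                have e5 : j - m = 0 := by omega
                rw [e1, e2, e4, e5]
                simp
            · have e1 : min j (m-1) = m - 1 := by omega
              have e15 : min j m = m := by omega
              have e2 : pS ν₂ (j - (m-1)) = (v-1) * min (j - (m-1)) 1 + pS ν' (j - (m-1) - 1) := by
                rw [hν₂eq, pS_replicate_append]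
              have e3 : min (j - (m-1)) 1 = 1 := by omega
              have e4 : j - (m-1) - 1 = j - m := by omega
              rw [e1, e15, e2, e3, e4]
              have hb := h4 (j - m)
              have hm1 : v * (m - 1) + v = v * m := by
                have : m - 1 + 1 = m := by omega
                calc v * (m-1) + v = v * ((m-1)+1) := by ring
                  _ = v * m := by rw [this]
              omega
          · apply cornOk_glue _ hν₂corn
            have h0 : v * (m-1) + c * (m-1) = (v + c) * (m-1) := by ring
            rw [h0, Nat.mul_mod]
            have h99 : (m - 1) % 2 = 0 := by omega
            simp [h99]
          · rw [hpt1]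
            rcases Nat.eq_or_lt_of_le hm with heq|hgt
            · have : m - 1 = 0 := by omega
              rw [this]
              simp only [List.replicate_zero, List.nil_append]
              show pt ν₂ 1 ≤ v
              rw [hν₂, pt_cons_one]
              omega
            · rw [pt_replicate_append_le (by omega) (by omega)]
          · intro hc0
            rw [hlenL]
            simp only [List.length_append, List.length_replicate, hν₂, List.length_cons]
            rw [h7 hc0]
            omega
      · -- Add mode
        intro hA
        by_cases hpar : (v * m + c * m) % 2 = 0
        · -- good run
          obtain ⟨ν', h1, h2, h3, h4, h5, h6, h6', h7⟩ := ihr.2 (by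
            intro hc0
            have hOμ := hA hc0
            rw [hsum] at hOμ
            subst hc0
            have : (v * m) % 2 = 0 := by simpa using hpar
            rw [Nat.odd_iff] at hOμ ⊢
            omega)
          have hν'le : ∀ p ∈ ν', p ≤ v := fun p hp =>
            le_trans (head_le_of_sorted h1 p hp) (by omega)
          refine ⟨List.replicate m v ++ ν', sorted_replicate_append h1 hν'le, ?_, ?_, ?_, ?_, ?_, ?_, ?_⟩
          · intro p hp
            rcases List.mem_append.mp hp with h|h
            · rw [List.eq_of_mem_replicate h]; exact hv
            · exact h2 p h
          · rw [sum_replicate_append, hsum, h3]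
            omega
          · intro j
            rw [pS_replicate_append, pS_replicate_append]
            have := h4 (j - m)
            omega
          · exact cornOk_glue hpar h5
          · rw [hpt1, pt_replicate_append_le le_rfl hm]
            omega
          · intro hcon
            exfalso
            rw [hpt1, pt_replicate_append_le le_rfl hm] at hcon
            omega
          · intro hc0
            rw [hlenL]
            simp only [List.length_append, List.length_replicate]
            rw [h7 hc0]
        · -- bad run
          have hodd : (v + c) % 2 = 1 ∧ m % 2 = 1 := by
            have h0 : (v * m + c * m) = (v + c) * m := by ring
            rw [h0] at hpar
            rcases Nat.mod_two_eq_zero_or_one (v + c) with h1|h1 <;>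
              rcases Nat.mod_two_eq_zero_or_one m with h2|h2 <;>
              first
                | exact ⟨h1, h2⟩
                | (exfalso; apply hpar; simp [Nat.mul_mod, h1, h2])
          obtain ⟨ν', h1, h2, h3, h4, h5, h6, h7⟩ := ihr.1 (by
            intro hc0
            have hOμ := hA hc0
            rw [hsum] at hOμ
            have hvm : (v * m) % 2 = 1 := by
              subst hc0
              simp at hpar
              omega
            rw [Nat.odd_iff] at hOμ
            rw [Nat.even_iff]
            omega)
          have hν'le : ∀ p ∈ ν', p ≤ v := fun p hp =>
            le_trans (head_le_of_sorted h1 p hp) (by omega)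
          set ν₂ : List ℕ := List.replicate (m-1) v ++ ν' with hν₂
          have hν₂sorted : ν₂.Pairwise (· ≥ ·) := sorted_replicate_append h1 hν'le
          have hν₂le : ∀ p ∈ ν₂, p ≤ v + 1 := by
            intro p hp
            rcases List.mem_append.mp hp with h|h
            · rw [List.eq_of_mem_replicate h]; omega
            · have := hν'le p h; omega
          have hν₂corn : CornOk c ν₂ := by
            apply cornOk_glue _ h5
            have h0 : v * (m-1) + c * (m-1) = (v + c) * (m-1) := by ring
            rw [h0, Nat.mul_mod]
            have h99 : (m - 1) % 2 = 0 := by omega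
            simp [h99]
          have hν₂pS : ∀ j, pS ν₂ j = v * min j (m-1) + pS ν' (j - (m-1)) :=
            fun j => pS_replicate_append j
          refine ⟨(v+1) :: ν₂, List.pairwise_cons.mpr ⟨hν₂le, hν₂sorted⟩, ?_, ?_, ?_, ?_, ?_, ?_, ?_⟩
          · intro p hp
            rcases List.mem_cons.mp hp with rfl|h
            · omega
            · rcases List.mem_append.mp h with h'|h'
              · rw [List.eq_of_mem_replicate h']; exact hv
              · exact h2 p h'
          · have : ((v+1) :: ν₂).sum = (v+1) + ν₂.sum := by simp
            rw [this, hν₂, sum_replicate_append, h3, hsum]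
            have hm1 : v * (m - 1) + v = v * m := by
              have h9 : m - 1 + 1 = m := by omega
              calc v * (m-1) + v = v * ((m-1)+1) := by ring
                _ = v * m := by rw [h9]
            omega
          · intro j
            have hcons : ((v+1) :: ν₂) = List.replicate 1 (v+1) ++ ν₂ := by simp
            rw [hcons, pS_replicate_append, pS_replicate_append, hν₂pS]
            rcases Nat.eq_zero_or_pos j with rfl|hj
            · simp
            rcases Nat.lt_or_ge j m with hjm|hjm
            · -- 1 ≤ j ≤ m : pS ν j = v*j + 1
              have e1 : min j 1 = 1 := by omega
              have e2 : min (j-1) (m-1) = j - 1 := by omega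
              have e3 : j - 1 - (m-1) = 0 := by omega
              have e4 : min j m = j := by omega
              have e5 : j - m = 0 := by omega
              rw [e1, e2, e3, e4, e5]
              simp only [pS_zero]
              have hm1 : v * (j - 1) + v = v * j := by
                have h9 : j - 1 + 1 = j := by omega
                calc v * (j-1) + v = v * ((j-1)+1) := by ring
                  _ = v * j := by rw [h9]
              omega
            · have e1 : min j 1 = 1 := by omega
              have e2 : min (j-1) (m-1) = m - 1 := by omega
              have e3 : j - 1 - (m-1) = j - m := by omega
              have e4 : min j m = m := by omega
              rw [e1, e2, e3, e4]
              have hb := h4 (j - m)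
              have hm1 : v * (m - 1) + v = v * m := by
                have h9 : m - 1 + 1 = m := by omega
                calc v * (m-1) + v = v * ((m-1)+1) := by ring
                  _ = v * m := by rw [h9]
              omega
          · have hcons : ((v+1) :: ν₂) = List.replicate 1 (v+1) ++ ν₂ := by simp
            rw [hcons]
            apply cornOk_glue _ hν₂corn
            have : (v+1) * 1 + c * 1 = v + c + 1 := by ring
            rw [this]
            omega
          · rw [hpt1, pt_cons_one]
          · intro _
            rw [hpt1]
            omega
          · intro hc0
            rw [hlenL]
            simp only [List.length_cons, hν₂, List.length_append, List.length_replicate]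
            rw [h7 hc0]
            omega

/-! ### The walk lemmas (maximality) -/

lemma mul_mod_two (x y : ℕ) : (x * y) % 2 = ((x % 2) * (y % 2)) % 2 := Nat.mul_mod x y 2

/-- Maximality walk, type C side: `d` special of type `C(2n)`, `e` in the `P₀` corner
class dominated by `d⁺`, `m` in the `P₁` corner class with `pS m ≤ min (pS e) 2n`.
Then `m ⪯ d`. -/
lemma walkC {n : ℕ} {d e m : List ℕ}
    (hds : d.Pairwise (· ≥ ·)) (hdp : ∀ p ∈ d, 0 < p) (hdsum : d.sum = 2*n)
    (hdcorn : CornOk 0 d)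
    (hdht : ∀ s, s % 2 = 1 % 2 → s ∈ d → height d s % 2 = 0)
    (hdpe : PEps 1 d)
    (hecorn : CornOk 1 e)
    (hebound : ∀ j, pS e j ≤ pS d j + 1)
    (hmcorn : CornOk 0 m)
    (hmbound : ∀ j, pS m j ≤ pS e j)
    (hmtot : ∀ j, pS m j ≤ 2*n) :
    ∀ j, pS m j ≤ pS d j := by
  by_contra hcon
  push_neg at hcon
  obtain ⟨j0, hj0⟩ := hcon
  have hQ : ∃ j, pS d j + 1 ≤ pS m j := ⟨j0, by omega⟩
  set j := Nat.find hQ with hjdef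
  have hQj : pS d j + 1 ≤ pS m j := Nat.find_spec hQ
  have hmin : ∀ i, i < j → ¬ (pS d i + 1 ≤ pS m i) := fun i hi => Nat.find_min hQ hi
  have hj1 : 1 ≤ j := by
    rcases Nat.eq_zero_or_pos j with h0|h0
    · exfalso; rw [h0] at hQj; simp at hQj
    · exact h0
  have hSm : pS m j = pS d j + 1 := le_antisymm (le_trans (hmbound j) (hebound j)) hQj
  have hSe : pS e j = pS d j + 1 :=
    le_antisymm (hebound j) (le_trans (by omega : pS d j + 1 ≤ pS m j) (hmbound j))
  set v := pt d j with hvdef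
  have hv1 : 1 ≤ v := by
    by_contra hv0
    have hlen : d.length < j := by
      by_contra hl
      have := pt_pos d hdp hj1 (by omega)
      omega
    have : pS d j = 2*n := by rw [pS_eq_sum_of_le d (by omega), hdsum]
    have := hmtot j
    omega
  have hprev : pS m (j-1) ≤ pS d (j-1) := by
    have := hmin (j-1) (by omega)
    omega
  have hsucc_d : pS d j = pS d (j-1) + v := by
    have := pS_succ d (j-1)
    rw [(by omega : j - 1 + 1 = j)] at this
    rw [this, hvdef]
  have hptm : v + 1 ≤ pt m j := by
    have h1 := pS_succ m (j-1)
    rw [(by omega : j - 1 + 1 = j)] at h1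
    omega
  have hmcornj : pt m (j+1) < pt m j := by
    by_contra hnc
    push_neg at hnc
    have h1 := pS_succ m j
    have h2 := pS_succ d j
    have h3 : pt d (j+1) ≤ v := pt_anti d hds hj1 (by omega)
    have h4 := hmbound (j+1)
    have h5 := hebound (j+1)
    omega
  have hSmpar : pS m j % 2 = 0 := by
    have := hmcorn j hj1 hmcornj
    simpa using this
  have hSdodd : pS d j % 2 = 1 := by omega
  set a := height d (v+1) with hadef
  set b := height d v with hbdef
  have hjb : j ≤ b := (pt_height_galois d hds hj1 hv1).mp (le_of_eq hvdef.symm)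
  have haj : a < j := by
    by_contra hc
    push_neg at hc
    have := (pt_height_galois d hds hj1 (by omega : 1 ≤ v + 1)).mpr hc
    omega
  have hflat : ∀ i, a < i → i ≤ b → pt d i = v := fun i h1 h2 =>
    pt_flat d hds hv1 h1 h2
  have hSa : pS d a % 2 = 0 := by
    rcases Nat.eq_zero_or_pos a with h0|h0
    · rw [h0]; simp
    · have hcornda : pt d (a+1) < pt d a := by
        have h1 : pt d (a+1) = v := hflat (a+1) (by omega) (by omega)
        have h2 : v + 1 ≤ pt d a := (pt_height_galois d hds h0 (by omega)).mpr le_rfl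
        omega
      have := hdcorn a h0 hcornda
      simpa using this
  have hrun : pS d j = pS d a + (j - a) * v := by
    have := flat_sum d (j - a) (fun u h1 h2 => hflat (a + u) (by omega) (by omega))
    rw [(by omega : a + (j - a) = j)] at this
    exact this
  have hvodd : v % 2 = 1 ∧ (j - a) % 2 = 1 := by
    have hm2 := mul_mod_two (j - a) v
    rcases Nat.mod_two_eq_zero_or_one v with h1|h1 <;>
      rcases Nat.mod_two_eq_zero_or_one (j-a) with h2|h2 <;>
      rw [h1, h2] at hm2 <;> simp at hm2 <;> omega
  have hvd : v ∈ d := by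
    have := pt_mem d hj1 (by omega : 0 < pt d j)
    rwa [← hvdef] at this
  have hbeven : b % 2 = 0 := hdht v (by omega) hvd
  have hcnt : Even (d.count v) := hdpe v hvd (by omega)
  have hsplit : b = d.count v + a := height_split d v
  have haeven : a % 2 = 0 := by
    rw [Nat.even_iff] at hcnt
    omega
  have hjodd : j % 2 = 1 := by omega
  -- the walk
  have key : ∀ t, pS e (j+t) = pS d (j+t) + 1 ∧ v ≤ pt e (j+t) ∧ pt d (j+t) = v ∧
      pS e (j+t) % 2 = (j+t+1) % 2 := by
    intro t
    induction t with
    | zero =>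
      refine ⟨by simpa using hSe, ?_, by simpa using hvdef.symm, ?_⟩
      · have h1 := pS_succ e (j-1)
        rw [(by omega : j - 1 + 1 = j)] at h1
        have h2 := hebound (j-1)
        simp only [Nat.add_zero]
        omega
      · simp only [Nat.add_zero]
        omega
    | succ t ih =>
      obtain ⟨ih1, ih2, ih3, ih4⟩ := ih
      have hnc : ¬ (pt e (j+t+1) < pt e (j+t)) := by
        intro hcorn
        have := hecorn (j+t) (by omega) hcorn
        omega
      push_neg at hnc
      have h1 := pS_succ e (j+t)
      have h2 := pS_succ d (j+t)
      have h3 : pt d (j+t+1) ≤ v := by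
        have := pt_anti d hds (by omega : 1 ≤ j+t) (by omega : j+t ≤ j+t+1)
        omega
      have h4 := hebound (j+t+1)
      have h5 : v ≤ pt d (j+t+1) := by omega
      have h6 : pt d (j+t+1) = v := by omega
      have h7 : pS e (j+t+1) = pS d (j+t+1) + 1 := by omega
      refine ⟨by rw [(by omega : j+(t+1) = j+t+1)]; exact h7,
        by rw [(by omega : j+(t+1) = j+t+1)]; omega,
        by rw [(by omega : j+(t+1) = j+t+1)]; exact h6, ?_⟩
      rw [(by omega : j+(t+1) = j+t+1)]
      have hv2 := hvodd.1
      omega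
  have hfin := key (b + 1 - j)
  have he1 : j + (b + 1 - j) = b + 1 := by omega
  rw [he1] at hfin
  have : v ≤ pt d (b+1) := le_of_eq hfin.2.2.1.symm
  have := (pt_height_galois d hds (by omega) hv1).mp this
  omega

/-- Maximality walk, type B side. -/
lemma walkB {n : ℕ} {d e m : List ℕ}
    (hds : d.Pairwise (· ≥ ·)) (hdp : ∀ p ∈ d, 0 < p) (hdsum : d.sum = 2*n+1)
    (hdcorn : CornOk 1 d)
    (hdht : ∀ s, s % 2 = 0 % 2 → (s = 0 ∨ s ∈ d) → height d s % 2 = 1)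
    (hdpe : PEps 0 d)
    (hecorn : CornOk 0 e)
    (hebound : ∀ j, pS e j ≤ pS d j)
    (hetot : ∀ j, pS e j ≤ 2*n)
    (hmcorn : CornOk 1 m)
    (hmbound : ∀ j, pS m j ≤ pS e j + 1) :
    ∀ j, pS m j ≤ pS d j := by
  by_contra hcon
  push_neg at hcon
  obtain ⟨j0, hj0⟩ := hcon
  have hQ : ∃ j, pS d j + 1 ≤ pS m j := ⟨j0, by omega⟩
  set j := Nat.find hQ with hjdef
  have hQj : pS d j + 1 ≤ pS m j := Nat.find_spec hQ
  have hmin : ∀ i, i < j → ¬ (pS d i + 1 ≤ pS m i) := fun i hi => Nat.find_min hQ hi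
  have hj1 : 1 ≤ j := by
    rcases Nat.eq_zero_or_pos j with h0|h0
    · exfalso; rw [h0] at hQj; simp at hQj
    · exact h0
  have hSm : pS m j = pS d j + 1 :=
    le_antisymm (le_trans (hmbound j) (by have := hebound j; omega)) hQj
  have hSe : pS e j = pS d j := by
    have h1 := hmbound j
    have h2 := hebound j
    omega
  set v := pt d j with hvdef
  have hv1 : 1 ≤ v := by
    by_contra hv0
    have hlen : d.length < j := by
      by_contra hl
      have := pt_pos d hdp hj1 (by omega)
      omega
    have h0 : pS d j = 2*n+1 := by rw [pS_eq_sum_of_le d (by omega), hdsum]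
    have := hetot j
    omega
  have hprev : pS m (j-1) ≤ pS d (j-1) := by
    have := hmin (j-1) (by omega)
    omega
  have hsucc_d : pS d j = pS d (j-1) + v := by
    have := pS_succ d (j-1)
    rw [(by omega : j - 1 + 1 = j)] at this
    rw [this, hvdef]
  have hptm : v + 1 ≤ pt m j := by
    have h1 := pS_succ m (j-1)
    rw [(by omega : j - 1 + 1 = j)] at h1
    omega
  have hmcornj : pt m (j+1) < pt m j := by
    by_contra hnc
    push_neg at hnc
    have h1 := pS_succ m j
    have h2 := pS_succ d j
    have h3 : pt d (j+1) ≤ v := pt_anti d hds hj1 (by omega)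
    have h4 := hmbound (j+1)
    have h5 := hebound (j+1)
    omega
  have hSmpar : (pS m j + j) % 2 = 0 := by
    have := hmcorn j hj1 hmcornj
    simpa using this
  set a := height d (v+1) with hadef
  set b := height d v with hbdef
  have hjb : j ≤ b := (pt_height_galois d hds hj1 hv1).mp (le_of_eq hvdef.symm)
  have haj : a < j := by
    by_contra hc
    push_neg at hc
    have := (pt_height_galois d hds hj1 (by omega : 1 ≤ v + 1)).mpr hc
    omega
  have hflat : ∀ i, a < i → i ≤ b → pt d i = v := fun i h1 h2 =>
    pt_flat d hds hv1 h1 h2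
  have hSa : (pS d a + a) % 2 = 0 := by
    rcases Nat.eq_zero_or_pos a with h0|h0
    · rw [h0]; simp
    · have hcornda : pt d (a+1) < pt d a := by
        have h1 : pt d (a+1) = v := hflat (a+1) (by omega) (by omega)
        have h2 : v + 1 ≤ pt d a := (pt_height_galois d hds h0 (by omega)).mpr le_rfl
        omega
      have := hdcorn a h0 hcornda
      simpa using this
  have hrun : pS d j = pS d a + (j - a) * v := by
    have := flat_sum d (j - a) (fun u h1 h2 => hflat (a + u) (by omega) (by omega))
    rw [(by omega : a + (j - a) = j)] at this
    exact this
  -- pS d j ≡ j + 1 (mod 2)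
  have hSdpar : (pS d j + j) % 2 = 1 := by omega
  have hveven : v % 2 = 0 ∧ (j - a) % 2 = 1 := by
    have hm2 := mul_mod_two (j - a) v
    rcases Nat.mod_two_eq_zero_or_one v with h1|h1 <;>
      rcases Nat.mod_two_eq_zero_or_one (j-a) with h2|h2 <;>
      rw [h1, h2] at hm2 <;> simp at hm2 <;> omega
  have hvd : v ∈ d := by
    have := pt_mem d hj1 (by omega : 0 < pt d j)
    rwa [← hvdef] at this
  have hbodd : b % 2 = 1 := hdht v (by omega) (Or.inr hvd)
  have hcnt : Even (d.count v) := hdpe v hvd (by omega)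
  have hsplit : b = d.count v + a := height_split d v
  have haodd : a % 2 = 1 := by
    rw [Nat.even_iff] at hcnt
    omega
  have hjeven : j % 2 = 0 := by omega
  have hSeodd : pS e j % 2 = 1 := by omega
  -- the walk
  have key : ∀ t, pS e (j+t) = pS d (j+t) ∧ v ≤ pt e (j+t) ∧ pt d (j+t) = v ∧
      pS e (j+t) % 2 = 1 := by
    intro t
    induction t with
    | zero =>
      refine ⟨by simpa using hSe, ?_, by simpa using hvdef.symm, by simpa using hSeodd⟩
      have h1 := pS_succ e (j-1)
      rw [(by omega : j - 1 + 1 = j)] at h1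
      have h2 := hebound (j-1)
      simp only [Nat.add_zero]
      omega
    | succ t ih =>
      obtain ⟨ih1, ih2, ih3, ih4⟩ := ih
      have hnc : ¬ (pt e (j+t+1) < pt e (j+t)) := by
        intro hcorn
        have := hecorn (j+t) (by omega) hcorn
        omega
      push_neg at hnc
      have h1 := pS_succ e (j+t)
      have h2 := pS_succ d (j+t)
      have h3 : pt d (j+t+1) ≤ v := by
        have := pt_anti d hds (by omega : 1 ≤ j+t) (by omega : j+t ≤ j+t+1)
        omega
      have h4 := hebound (j+t+1)
      have h5 : v ≤ pt d (j+t+1) := by omega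
      have h6 : pt d (j+t+1) = v := by omega
      have h7 : pS e (j+t+1) = pS d (j+t+1) := by omega
      refine ⟨by rw [(by omega : j+(t+1) = j+t+1)]; exact h7,
        by rw [(by omega : j+(t+1) = j+t+1)]; omega,
        by rw [(by omega : j+(t+1) = j+t+1)]; exact h6, ?_⟩
      rw [(by omega : j+(t+1) = j+t+1)]
      have hv2 := hveven.1
      omega
  have hfin := key (b + 1 - j)
  have he1 : j + (b + 1 - j) = b + 1 := by omega
  rw [he1] at hfin
  have : v ≤ pt d (b+1) := le_of_eq hfin.2.2.1.symm
  have := (pt_height_galois d hds (by omega) hv1).mp this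
  omega

/-! ### dminus / dplus -/

lemma pS_dplus {l : List ℕ} (hl : l ≠ []) {j : ℕ} (hj : 1 ≤ j) :
    pS (dplus l) j = pS l j + 1 := by
  cases l with
  | nil => exact absurd rfl hl
  | cons a t =>
    obtain ⟨k, rfl⟩ : ∃ k, j = k + 1 := ⟨j - 1, by omega⟩
    show (((a+1) :: t).take (k+1)).sum = ((a :: t).take (k+1)).sum + 1
    simp [List.take_succ_cons]
    omega

lemma getLast_le_of_sorted : ∀ (l : List ℕ) (h : l ≠ []), l.Pairwise (· ≥ ·) →
    ∀ p ∈ l, l.getLast h ≤ p := by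
  intro l
  induction l with
  | nil => intro h; simp at h
  | cons a t ih =>
    intro h hs p hp
    cases t with
    | nil =>
      simp at hp
      subst hp
      simp [List.getLast]
    | cons b t' =>
      rw [List.getLast_cons (by simp)]
      rcases List.mem_cons.mp hp with rfl|hp'
      · have hbt : (b::t').getLast (by simp) ∈ b :: t' := List.getLast_mem _
        exact List.rel_of_pairwise_cons hs hbt
      · exact ih (by simp) hs.of_cons p hp'

lemma dminus_spec {l : List ℕ} (hs : l.Pairwise (· ≥ ·)) (hp : ∀ p ∈ l, 0 < p)
    (hne : l ≠ []) :
    (dminus l).Pairwise (· ≥ ·) ∧ (∀ p ∈ dminus l, 0 < p) ∧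
      (dminus l).length ≤ l.length ∧
      (∀ j, pS (dminus l) j = min (pS l j) (l.sum - 1)) ∧
      (dminus l).sum = l.sum - 1 := by
  set w := l.getLast hne with hwdef
  have hw1 : 1 ≤ w := hp w (List.getLast_mem hne)
  have hwle : ∀ p ∈ l, w ≤ p := getLast_le_of_sorted l hne hs
  have hsplit : l.dropLast ++ [w] = l := List.dropLast_append_getLast hne
  have hlen : l.length = l.dropLast.length + 1 := by
    conv_lhs => rw [← hsplit]
    simp
  have hgld : l.getLastD 0 = w := by
    rw [List.getLastD_eq_getLast?, List.getLast?_eq_getLast hne]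
    rfl
  have hdl_pos : ∀ p ∈ l.dropLast, 0 < p := fun p hpm =>
    hp p ((List.dropLast_sublist l).subset hpm)
  have hdl_sorted : l.dropLast.Pairwise (· ≥ ·) :=
    List.Pairwise.sublist (List.dropLast_sublist l) hs
  have hdl_ge : ∀ p ∈ l.dropLast, w ≤ p := fun p hpm =>
    hwle p ((List.dropLast_sublist l).subset hpm)
  have hsum : l.sum = l.dropLast.sum + w := by
    conv_lhs => rw [← hsplit]
    simp
  have hpSdl : ∀ j, j + 1 ≤ l.length → pS l.dropLast j = pS l j := by
    intro j hj
    unfold pS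
    conv_rhs => rw [← hsplit]
    rw [List.take_append_of_le_length (by omega)]
  have hpSdl_sum : ∀ j, l.length ≤ j + 1 → pS l.dropLast j = l.dropLast.sum := by
    intro j hj
    exact pS_eq_sum_of_le _ (by omega)
  have hpSl_le : ∀ j, j + 1 ≤ l.length → pS l j ≤ l.sum - 1 := by
    intro j hj
    have h1 : pS l j = pS l.dropLast j := (hpSdl j hj).symm
    have h2 : pS l.dropLast j ≤ l.dropLast.sum := pS_le_sum _ _
    omega
  by_cases hw : w = 1
  · have hdm : dminus l = l.dropLast := by
      unfold dminus
      rw [hgld, hw]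
      simp only [Nat.sub_self]
      rw [List.filter_append]
      have h1 : l.dropLast.filter (fun p => decide (0 < p)) = l.dropLast :=
        List.filter_eq_self.mpr (fun a ha => by simpa using hdl_pos a ha)
      have h2 : [0].filter (fun p => decide (0 < p)) = [] := by simp
      rw [h1, h2, List.append_nil]
    rw [hdm]
    refine ⟨hdl_sorted, hdl_pos, by omega, ?_, by omega⟩
    intro j
    rcases Nat.lt_or_ge (j+1) (l.length + 1) with hj|hj
    · rw [hpSdl j (by omega)]
      have := hpSl_le j (by omega)
      omega
    · rw [hpSdl_sum j (by omega)]
      have h1 : pS l j ≥ pS l (l.length - 1) := pS_mono l (by omega)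
      have h2 : pS l (l.length - 1) = pS l.dropLast (l.length - 1) :=
        (hpSdl _ (by omega)).symm
      have h3 : pS l.dropLast (l.length - 1) = l.dropLast.sum :=
        pS_eq_sum_of_le _ (by omega)
      omega
  · have hdm : dminus l = l.dropLast ++ [w - 1] := by
      unfold dminus
      rw [hgld]
      apply List.filter_eq_self.mpr
      intro a ha
      rcases List.mem_append.mp ha with h|h
      · simpa using hdl_pos a h
      · simp at h
        subst h
        simp
        omega
    rw [hdm]
    have hlen2 : (l.dropLast ++ [w-1]).length = l.length := by
      simp
      omega
    refine ⟨?_, ?_, by omega, ?_, ?_⟩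
    · rw [List.pairwise_append]
      refine ⟨hdl_sorted, by simp, ?_⟩
      intro a ha b hb
      simp at hb
      subst hb
      have := hdl_ge a ha
      omega
    · intro p hpm
      rcases List.mem_append.mp hpm with h|h
      · exact hdl_pos p h
      · simp at h; omega
    · intro j
      rcases Nat.lt_or_ge (j+1) (l.length + 1) with hj|hj
      · rcases Nat.lt_or_ge (j+1) l.length with hj2|hj2
        · -- j ≤ len - 2 < dropLast length
          have e1 : pS (l.dropLast ++ [w-1]) j = pS l.dropLast j := by
            unfold pS
            rw [List.take_append_of_le_length (by omega)]
          rw [e1, hpSdl j (by omega)]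
          have := hpSl_le j (by omega)
          omega
        · -- j = len - 1 : exactly dropLast
          have e0 : j = l.length - 1 := by omega
          have e1 : pS (l.dropLast ++ [w-1]) j = pS l.dropLast j := by
            unfold pS
            rw [List.take_append_of_le_length (by omega)]
          rw [e1, hpSdl j (by omega)]
          have := hpSl_le j (by omega)
          omega
      · have e1 : pS (l.dropLast ++ [w-1]) j = l.dropLast.sum + (w - 1) := by
          rw [pS_eq_sum_of_le _ (by omega)]
          simp
        rw [e1]
        have h1 : pS l j = l.sum := pS_eq_sum_of_le l (by omega)
        omega
    · rw [List.sum_append]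
      simp
      omega

lemma sum_pos_ne_nil {l : List ℕ} (h : 0 < l.sum) : l ≠ [] := by
  rintro rfl
  simp at h

end SpBC

open SpBC in
/-- The maps `f_BC : P^sp_B(2n+1) → P^sp_C(2n)`, `d ↦ (d⁻)_C`, and
`f_CB : P^sp_C(2n) → P^sp_B(2n+1)`, `d ↦ (d⁺)_B`, are mutually inverse bijections. -/
theorem fBC_fCB_inverse (n : ℕ) :
    (∀ d e f : List ℕ, IsPartition (2 * n + 1) d → PEpsEps 0 1 d →
      IsCollapse 1 (2 * n) (dminus d) e →
      IsCollapse 0 (2 * n + 1) (dplus e) f → f = d) ∧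
    (∀ d e f : List ℕ, IsPartition (2 * n) d → PEpsEps 1 0 d →
      IsCollapse 0 (2 * n + 1) (dplus d) e →
      IsCollapse 1 (2 * n) (dminus e) f → f = d) := by
  constructor
  · -- part 1 : B → C → B
    intro d e f hd hsp he hf
    obtain ⟨hds, hdp, hdsum⟩ := hd
    obtain ⟨⟨hes, hep, hesum⟩, hepe, hedom, hemax⟩ := he
    obtain ⟨⟨hfs, hfp, hfsum⟩, hfpe, hfdom, hfmax⟩ := hf
    by_cases hemp : e = []
    · exfalso
      subst hemp
      have h1 : pS f f.length ≤ pS (dplus []) f.length := hfdom f.length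
      have h2 : pS f f.length = f.sum := pS_eq_sum_of_le f le_rfl
      have h3 : pS (dplus []) f.length = 0 := by simp [dplus, pS]
      omega
    have hdne : d ≠ [] := sum_pos_ne_nil (by omega)
    obtain ⟨hdm_s, hdm_p, hdm_len, hdm_pS, hdm_sum⟩ := dminus_spec hds hdp hdne
    have hdmsum : (dminus d).sum = 2*n := by omega
    obtain ⟨ν, hν1, hν2, hν3, hν4, hν5, hν6, hν7⟩ :=
      (witness 0 (by omega) (dminus d).length (dminus d) le_rfl hdm_s hdm_p).1
        (fun _ => by rw [hdmsum]; exact ⟨n, by ring⟩)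
    have hνpart : IsPartition (2*n) ν := ⟨hν1, hν2, by rw [hν3, hdmsum]⟩
    have hνpe : PEps 1 ν :=
      (peps_iff_cornOk (e := 1) (c := 0) (by norm_num) ν.length ν le_rfl hν1 hν2).mpr hν5
    have hνdom : Dom ν (dminus d) := fun j => (hν4 j).1
    have hνe : Dom ν e := hemax ν hνpart hνpe hνdom
    have hdomd : Dom d (dplus e) := by
      intro j
      rcases Nat.eq_zero_or_pos j with rfl|hj
      · simp
      · show pS d j ≤ pS (dplus e) j
        rw [pS_dplus hemp hj]
        have hb := (hν4 j).2
        have hmin := hdm_pS j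
        rw [hdsum] at hmin
        have hne : pS ν j ≤ pS e j := hνe j
        rcases Nat.lt_or_ge (pS d j) (2*n+1) with hlt|hge
        · omega
        · have hEq : pS d j = 2*n+1 := by
            have := pS_le_sum d j
            omega
          have hjlen : d.length ≤ j := by
            by_contra hc
            push_neg at hc
            have h1 := pS_succ d j
            have h2 : 0 < pt d (j+1) := pt_pos d hdp (by omega) (by omega)
            have h3 : pS d (j+1) ≤ d.sum := pS_le_sum d (j+1)
            omega
          have hν_full : pS ν j = 2*n := by
            rw [pS_eq_sum_of_le ν (by rw [hν7 rfl]; omega), hν3, hdmsum]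
          omega
    have hdf : Dom d f := hfmax d ⟨hds, hdp, hdsum⟩ hsp.1 hdomd
    have hdcorn : CornOk 1 d :=
      (peps_iff_cornOk (e := 0) (c := 1) (by norm_num) d.length d le_rfl hds hdp).mp hsp.1
    have hdht : ∀ s, s % 2 = 0 % 2 → (s = 0 ∨ s ∈ d) → height d s % 2 = 1 := by
      intro s h1 h2
      have := hsp.2 s h1 h2
      simpa using this
    have hecorn : CornOk 0 e :=
      (peps_iff_cornOk (e := 1) (c := 0) (by norm_num) e.length e le_rfl hes hep).mp hepe
    have hebound : ∀ j, pS e j ≤ pS d j := by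
      intro j
      have h1 : pS e j ≤ pS (dminus d) j := hedom j
      have h2 := hdm_pS j
      omega
    have hetot : ∀ j, pS e j ≤ 2*n := by
      intro j
      have h1 : pS e j ≤ pS (dminus d) j := hedom j
      have h2 := hdm_pS j
      rw [hdsum] at h2
      omega
    have hmcorn : CornOk 1 f :=
      (peps_iff_cornOk (e := 0) (c := 1) (by norm_num) f.length f le_rfl hfs hfp).mp hfpe
    have hmbound : ∀ j, pS f j ≤ pS e j + 1 := by
      intro j
      rcases Nat.eq_zero_or_pos j with rfl|hj
      · simp
      · have h1 : pS f j ≤ pS (dplus e) j := hfdom j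
        rw [pS_dplus hemp hj] at h1
        exact h1
    have hfd : ∀ j, pS f j ≤ pS d j :=
      walkB hds hdp hdsum hdcorn hdht hsp.1 hecorn hebound hetot hmcorn hmbound
    exact eq_of_pS_eq f d hfp hdp (fun j => le_antisymm (hfd j) (hdf j))
  · -- part 2 : C → B → C
    intro d e f hd hsp he hf
    obtain ⟨hds, hdp, hdsum⟩ := hd
    obtain ⟨⟨hes, hep, hesum⟩, hepe, hedom, hemax⟩ := he
    obtain ⟨⟨hfs, hfp, hfsum⟩, hfpe, hfdom, hfmax⟩ := hf
    by_cases hdemp : d = []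
    · exfalso
      subst hdemp
      have h1 : pS e e.length ≤ pS (dplus []) e.length := hedom e.length
      have h2 : pS e e.length = e.sum := pS_eq_sum_of_le e le_rfl
      have h3 : pS (dplus []) e.length = 0 := by simp [dplus, pS]
      omega
    have hene : e ≠ [] := sum_pos_ne_nil (by omega)
    obtain ⟨hem_s, hem_p, hem_len, hem_pS, hem_sum⟩ := dminus_spec hes hep hene
    obtain ⟨ν, hν1, hν2, hν3, hν4, hν5, hν6, hν6', hν7⟩ :=
      (witness 1 le_rfl d.length d le_rfl hds hdp).2 (fun h => by omega)
    have hνpart : IsPartition (2*n+1) ν := ⟨hν1, hν2, by rw [hν3, hdsum]⟩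
    have hνpe : PEps 0 ν :=
      (peps_iff_cornOk (e := 0) (c := 1) (by norm_num) ν.length ν le_rfl hν1 hν2).mpr hν5
    have hνdom : Dom ν (dplus d) := by
      intro j
      rcases Nat.eq_zero_or_pos j with rfl|hj
      · simp
      · show pS ν j ≤ pS (dplus d) j
        rw [pS_dplus hdemp hj]
        exact (hν4 j).2
    have hνe : Dom ν e := hemax ν hνpart hνpe hνdom
    have hdom_d : Dom d (dminus e) := by
      intro j
      show pS d j ≤ pS (dminus e) j
      rw [hem_pS j, hesum]
      have h1 := (hν4 j).1
      have h2 : pS ν j ≤ pS e j := hνe j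
      have h3 : pS d j ≤ 2*n := by
        have := pS_le_sum d j
        omega
      omega
    have hdf : Dom d f := hfmax d ⟨hds, hdp, hdsum⟩ hsp.1 hdom_d
    have hdcorn : CornOk 0 d :=
      (peps_iff_cornOk (e := 1) (c := 0) (by norm_num) d.length d le_rfl hds hdp).mp hsp.1
    have hdht : ∀ s, s % 2 = 1 % 2 → s ∈ d → height d s % 2 = 0 := by
      intro s h1 h2
      have := hsp.2 s h1 (Or.inr h2)
      simpa using this
    have hecorn : CornOk 1 e :=
      (peps_iff_cornOk (e := 0) (c := 1) (by norm_num) e.length e le_rfl hes hep).mp hepe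
    have hebound : ∀ j, pS e j ≤ pS d j + 1 := by
      intro j
      rcases Nat.eq_zero_or_pos j with rfl|hj
      · simp
      · have h1 : pS e j ≤ pS (dplus d) j := hedom j
        rw [pS_dplus hdemp hj] at h1
        exact h1
    have hmcorn : CornOk 0 f :=
      (peps_iff_cornOk (e := 1) (c := 0) (by norm_num) f.length f le_rfl hfs hfp).mp hfpe
    have hmbound : ∀ j, pS f j ≤ pS e j := by
      intro j
      have h1 : pS f j ≤ pS (dminus e) j := hfdom j
      rw [hem_pS j] at h1
      omega
    have hmtot : ∀ j, pS f j ≤ 2*n := by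
      intro j
      have h1 : pS f j ≤ pS (dminus e) j := hfdom j
      rw [hem_pS j, hesum] at h1
      omega
    have hfd : ∀ j, pS f j ≤ pS d j :=
      walkC hds hdp hdsum hdcorn hdht hsp.1 hecorn hebound hmcorn hmbound hmtot
    exact eq_of_pS_eq f d hfp hdp (fun j => le_antisymm (hfd j) (hdf j))
end

section
/- The map f_CB : P^sp_C(2n) → P^sp_B(2n+1), d ↦ (d⁺)_B, is order-preserving: if d, d' ∈ P^sp_C(2n) satisfy d ⪯ d' in the dominance order, then f_CB(d) ⪯ f_CB(d'). -/
/-- The map `f_CB : P^sp_C(2n) → P^sp_B(2n+1)`, `d ↦ (d⁺)_B`, is order-preserving for the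
dominance order. -/
theorem fCB_monotone (n : ℕ) (d d' : List ℕ)
    (hd : IsPartition (2 * n) d) (hd' : IsPartition (2 * n) d')
    (hdC : PEpsEps 1 0 d) (hd'C : PEpsEps 1 0 d')
    (hdom : Dom d d')
    (e e' : List ℕ)
    (he : IsCollapse 0 (2 * n + 1) (dplus d) e)
    (he' : IsCollapse 0 (2 * n + 1) (dplus d') e') :
    Dom e e' := by
  apply he'.2.2.2 e he.1 he.2.1
  intro j
  refine le_trans (he.2.2.1 j) ?_
  -- show ((dplus d).take j).sum ≤ ((dplus d').take j).sum
  match d, j with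
  | [], j => simp [dplus]
  | a :: r, 0 => simp
  | a :: r, (m+1) =>
    have hd'ne : d' ≠ [] := by
      intro h
      have h0 : (2 : ℕ) * n = 0 := by
        have := hd'.2.2; rw [h] at this; simpa using this.symm
      have ha : 0 < a := hd.2.1 a (by simp)
      have hs : (a :: r).sum = 0 := by rw [hd.2.2, h0]
      simp only [List.sum_cons] at hs
      omega
    match d', hd'ne with
    | b :: r', _ =>
      have h1 : ((dplus (a :: r)).take (m+1)).sum = (((a :: r) : List ℕ).take (m+1)).sum + 1 := by
        simp [dplus, List.take_succ_cons]; omega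
      have h2 : ((dplus (b :: r')).take (m+1)).sum = (((b :: r') : List ℕ).take (m+1)).sum + 1 := by
        simp [dplus, List.take_succ_cons]; omega
      rw [h1, h2]
      exact Nat.add_le_add_right (hdom (m+1)) 1
end

section
/- Let n ≥ 1 and let d ∈ P^sp_D(2n) = P_{0,0}(2n). Then f_DC(d) := ((d⁺)⁻)_C belongs to P^ms_C(2n) = P_{1,1}(2n). -/
lemma fdc_sum_take_succ (l : List ℕ) (k : ℕ) :
    (l.take (k+1)).sum = (l.take k).sum + l.getD k 0 := by
  by_cases h : k < l.length
  · rw [List.sum_take_succ l k h, List.getD_eq_getElem?_getD, List.getElem?_eq_getElem h]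
    rfl
  · push_neg at h
    rw [List.take_of_length_le h, List.take_of_length_le (by omega),
      List.getD_eq_getElem?_getD, List.getElem?_eq_none h]
    rfl

lemma fdc_getD_lt_length (l : List ℕ) (k : ℕ) (h : 0 < l.getD k 0) : k < l.length := by
  by_contra hc
  push_neg at hc
  rw [List.getD_eq_getElem?_getD, List.getElem?_eq_none hc] at h
  simp at h

lemma fdc_getD_anti (l : List ℕ) (hl : l.Pairwise (· ≥ ·)) {i j : ℕ} (hij : i ≤ j) :
    l.getD j 0 ≤ l.getD i 0 := by
  by_cases hj : j < l.length
  · have hi : i < l.length := lt_of_le_of_lt hij hj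
    rw [List.getD_eq_getElem?_getD, List.getElem?_eq_getElem hj,
       List.getD_eq_getElem?_getD, List.getElem?_eq_getElem hi]
    rcases eq_or_lt_of_le hij with rfl | hlt
    · rfl
    · exact (List.pairwise_iff_getElem.mp hl) i j hi hj hlt
  · push_neg at hj
    rw [List.getD_eq_getElem?_getD (l := l) (i := j), List.getElem?_eq_none hj]
    simp

lemma fdc_sum_mod_two (l : List ℕ) :
    l.sum % 2 = l.countP (fun x => x % 2 == 1) % 2 := by
  induction l with
  | nil => simp
  | cons x t ih =>
    rw [List.sum_cons, List.countP_cons]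
    by_cases h : x % 2 = 1
    · simp only [h]
      norm_num
      omega
    · have h0 : x % 2 = 0 := by omega
      simp only [h0]
      norm_num
      omega

lemma fdc_even_countP (l : List ℕ) (p : ℕ → Bool)
    (h : ∀ v ∈ l, p v = true → Even (l.count v)) : Even (l.countP p) := by
  rw [List.countP_eq_length_filter]
  have hlen : (l.filter p).length = ∑ a ∈ (l.filter p).toFinset, (l.filter p).count a := by
    have := Multiset.toFinset_sum_count_eq (l.filter p : Multiset ℕ)
    simpa using this.symm
  rw [hlen]
  apply Finset.even_sum
  intro a ha
  rw [List.mem_toFinset, List.mem_filter] at ha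
  rw [List.count_filter ha.2]
  exact h a ha.1 ha.2

lemma fdc_filter_decomp (s : ℕ) (l : List ℕ) (hl : l.Pairwise (· ≥ ·)) :
    l = l.filter (fun x => decide (s < x)) ++ l.filter (fun x => x == s)
        ++ l.filter (fun x => decide (x < s)) := by
  induction l with
  | nil => simp
  | cons x t ih =>
    rw [List.pairwise_cons] at hl
    obtain ⟨hx, ht⟩ := hl
    have iht := ih ht
    rcases lt_trichotomy x s with h | h | h
    · have h1 : t.filter (fun x => decide (s < x)) = [] := by
        rw [List.filter_eq_nil_iff]; intro a ha; simp; have := hx a ha; omega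
      have h2 : t.filter (fun x => x == s) = [] := by
        rw [List.filter_eq_nil_iff]; intro a ha; simp; have := hx a ha; omega
      rw [h1, h2] at iht
      simp only [List.filter_cons]
      have hx1 : ¬ (s < x) := by omega
      have hx2 : ¬ (x = s) := by omega
      simp [hx1, hx2, h, h1, h2]
      exact iht
    · subst h
      have h1 : t.filter (fun y => decide (x < y)) = [] := by
        rw [List.filter_eq_nil_iff]; intro a ha; simp; have := hx a ha; omega
      rw [h1] at iht
      simp only [List.filter_cons]
      simp [h1]
      exact iht
    · simp only [List.filter_cons]
      have hx2 : ¬ (x = s) := by omega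
      have hx3 : ¬ (x < s) := by omega
      simp [h, hx2, hx3]
      rw [← List.append_assoc]; exact iht

lemma fdc_getD_mem (l : List ℕ) (p : ℕ) (h : p < l.length) : l.getD p 0 ∈ l := by
  rw [List.getD_eq_getElem?_getD, List.getElem?_eq_getElem h]
  exact List.getElem_mem h

lemma fdc_block_range (l A C : List ℕ) (s mB p : ℕ)
    (hl : l = A ++ List.replicate mB s ++ C)
    (hA : ∀ x ∈ A, s < x) (hC : ∀ x ∈ C, x < s) (hs : 1 ≤ s)
    (hp : l.getD p 0 = s) : A.length ≤ p ∧ p < A.length + mB := by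
  subst hl
  constructor
  · by_contra hc
    push_neg at hc
    rw [List.append_assoc, List.getD_append _ _ _ _ hc] at hp
    have : A.getD p 0 ∈ A := fdc_getD_mem A p hc
    have := hA _ this
    omega
  · by_contra hc
    push_neg at hc
    have hlen1 : A.length ≤ p := by omega
    rw [List.append_assoc, List.getD_append_right _ _ _ _ hlen1] at hp
    have hlen2 : (List.replicate mB s).length ≤ p - A.length := by
      simp; omega
    rw [List.getD_append_right _ _ _ _ hlen2] at hp
    by_cases hr : p - A.length - (List.replicate mB s).length < C.length
    · have : C.getD _ 0 ∈ C := fdc_getD_mem C _ hr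
      rw [hp] at this
      have := hC _ this
      omega
    · push_neg at hr
      rw [List.getD_eq_getElem?_getD, List.getElem?_eq_none hr] at hp
      simp at hp
      omega

lemma fdc_block_getD (l A C : List ℕ) (s mB p : ℕ)
    (hl : l = A ++ List.replicate mB s ++ C)
    (h1 : A.length ≤ p) (h2 : p < A.length + mB) : l.getD p 0 = s := by
  subst hl
  rw [List.append_assoc, List.getD_append_right _ _ _ _ h1,
    List.getD_append _ _ _ _ (by simp; omega)]
  rw [List.getD_eq_getElem?_getD, List.getElem?_eq_getElem (by simp; omega)]
  simp

lemma fdc_take_block (l A C : List ℕ) (s mB k : ℕ)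
    (hl : l = A ++ List.replicate mB s ++ C)
    (h1 : A.length ≤ k) (h2 : k ≤ A.length + mB) :
    l.take k = A ++ List.replicate (k - A.length) s := by
  subst hl
  rw [List.append_assoc, List.take_append,
    List.take_of_length_le h1, List.take_append,
    List.take_replicate]
  have h3 : k - A.length - (List.replicate mB s).length = 0 := by simp; omega
  rw [h3]
  have h4 : (k - A.length) ⊓ mB = k - A.length := by omega
  rw [h4]
  simp

lemma fdc_sum_take_block (l A C : List ℕ) (s mB k : ℕ)
    (hl : l = A ++ List.replicate mB s ++ C)
    (h1 : A.length ≤ k) (h2 : k ≤ A.length + mB) :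
    (l.take k).sum = A.sum + (k - A.length) * s := by
  rw [fdc_take_block l A C s mB k hl h1 h2]
  simp [List.sum_append, List.sum_replicate, smul_eq_mul]

lemma fdc_height_block (l A C : List ℕ) (s mB : ℕ)
    (hl : l = A ++ List.replicate mB s ++ C)
    (hA : ∀ x ∈ A, s < x) (hC : ∀ x ∈ C, x < s) :
    height l s = A.length + mB := by
  subst hl
  rw [height, List.filter_append, List.filter_append]
  have e1 : A.filter (fun p => decide (s ≤ p)) = A := by
    rw [List.filter_eq_self]; intro a ha; simp; have := hA a ha; omega
  have e2 : (List.replicate mB s).filter (fun p => decide (s ≤ p)) = List.replicate mB s := by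
    rw [List.filter_eq_self]; intro a ha; simp at ha ⊢; omega
  have e3 : C.filter (fun p => decide (s ≤ p)) = [] := by
    rw [List.filter_eq_nil_iff]; intro a ha; simp; have := hC a ha; omega
  rw [e1, e2, e3]
  simp

lemma fdc_parity_core (l A C : List ℕ) (s mB k : ℕ)
    (hl : l = A ++ List.replicate mB s ++ C)
    (hA : ∀ x ∈ A, s < x) (hC : ∀ x ∈ C, x < s)
    (hs1 : s % 2 = 1) (hk : 1 ≤ k) (hgd : l.getD (k-1) 0 = s)
    (key : (A.sum + A.length) % 2 = 0) :
    (l.take k).sum % 2 = k % 2 := by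
  obtain ⟨h1, h2⟩ := fdc_block_range l A C s mB (k-1) hl hA hC (by omega) hgd
  rw [fdc_sum_take_block l A C s mB k hl (by omega) (by omega)]
  have hmul : (k - A.length) * s % 2 = (k - A.length) % 2 := by
    rw [Nat.mul_mod, hs1, mul_one]
    omega
  omega

lemma fdc_replicate_of_filter (s : ℕ) (l : List ℕ) :
    l.filter (fun x => x == s) = List.replicate (l.filter (fun x => x == s)).length s := by
  rw [List.eq_replicate_iff]
  refine ⟨rfl, ?_⟩
  intro b hb
  rw [List.mem_filter] at hb
  simpa using hb.2

lemma fdc_parity_P0 (d : List ℕ) (hds : d.Pairwise (· ≥ ·)) (hP0 : PEps 0 d)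
    (s k : ℕ) (hs1 : s % 2 = 1) (hk : 1 ≤ k) (hdk1 : d.getD (k-1) 0 = s) :
    (d.take k).sum % 2 = k % 2 := by
  set A := d.filter (fun x => decide (s < x)) with hAdef
  set B := d.filter (fun x => x == s) with hBdef
  set C := d.filter (fun x => decide (x < s)) with hCdef
  have hdecomp : d = A ++ List.replicate B.length s ++ C := by
    have := fdc_filter_decomp s d hds
    rw [← fdc_replicate_of_filter s d]
    exact this
  have hA : ∀ x ∈ A, s < x := by intro x hx; rw [hAdef, List.mem_filter] at hx; simpa using hx.2
  have hC : ∀ x ∈ C, x < s := by intro x hx; rw [hCdef, List.mem_filter] at hx; simpa using hx.2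
  apply fdc_parity_core d A C s B.length k hdecomp hA hC hs1 hk hdk1
  -- key : (A.sum + A.length) % 2 = 0
  have hsum := fdc_sum_mod_two A
  have hlen := List.length_eq_countP_add_countP (fun x => x % 2 == 1) (l := A)
  have heven : Even (A.countP (fun a => decide ¬(a % 2 == 1) = true)) := by
    rw [hAdef, List.countP_filter]
    apply fdc_even_countP
    intro v hv hpv
    simp at hpv
    exact hP0 v hv (by omega)
  rw [Nat.even_iff] at heven
  omega

lemma fdc_getLastD_eq (l : List ℕ) (h : l ≠ []) (x : ℕ) :
    l.getLastD x = l.getD (l.length - 1) 0 := by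
  have hlen : l.length - 1 < l.length := by
    cases l with
    | nil => simp at h
    | cons a t => simp
  rw [List.getLastD_eq_getLast?, List.getLast?_eq_getElem?,
    List.getD_eq_getElem?_getD, List.getElem?_eq_getElem hlen]
  rfl

lemma fdc_getD_dropLast (l : List ℕ) (j : ℕ) (h : j < l.length - 1) :
    l.dropLast.getD j 0 = l.getD j 0 := by
  have h1 : j < l.dropLast.length := by simp; omega
  have h2 : j < l.length := by omega
  rw [List.getD_eq_getElem?_getD, List.getElem?_eq_getElem h1,
    List.getD_eq_getElem?_getD, List.getElem?_eq_getElem h2]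
  simp [List.getElem_dropLast]

lemma fdc_mu_structure (d0 : ℕ) (t : List ℕ) (ht : t ≠ [])
    (hpos : ∀ p ∈ (d0::t), 0 < p) :
    ∃ w : List ℕ,
      dminus (dplus (d0::t)) = (d0+1) :: (t.dropLast ++ w) ∧
      w.getD 0 0 = t.getD (t.length - 1) 0 - 1 ∧
      w.length ≤ 1 ∧
      (∀ x ∈ w, x = t.getD (t.length - 1) 0 - 1 ∧ 0 < x) := by
  set lst := t.getD (t.length - 1) 0 with hlst
  have hlstmem : lst ∈ t := fdc_getD_mem t _ (by cases t with | nil => simp at ht | cons a u => simp)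
  have hlstpos : 0 < lst := hpos lst (by simp [hlstmem])
  have hdplus : dplus (d0::t) = (d0+1) :: t := rfl
  have hdrop : ((d0+1) :: t).dropLast = (d0+1) :: t.dropLast := by
    cases t with | nil => simp at ht | cons a u => rfl
  have hlast : ((d0+1) :: t).getLastD 0 = lst := by
    rw [List.getLastD_cons, fdc_getLastD_eq t ht]
  refine ⟨[lst - 1].filter (fun p => decide (0 < p)), ?_, ?_, ?_, ?_⟩
  · rw [dminus, hdplus, hdrop, hlast]
    have hself : List.filter (fun p => decide (0 < p)) t.dropLast = t.dropLast := by
      rw [List.filter_eq_self]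
      intro a ha
      have hat : a ∈ t := List.mem_of_mem_dropLast ha
      simpa using hpos a (by simp [hat])
    simp only [List.filter_cons, List.filter_append, hself]
    simp
  · by_cases h : 0 < lst - 1
    · simp [h]
    · have : lst - 1 = 0 := by omega
      simp [this]
  · by_cases h : 0 < lst - 1 <;> simp [h]
  · intro x hx
    rw [List.mem_filter] at hx
    simp at hx
    obtain ⟨h1, h2⟩ := hx
    exact ⟨h1, by omega⟩

lemma fdc_strict (n : ℕ) (hn : 1 ≤ n) (d : List ℕ)
    (hd : IsPartition (2*n) d) (hdP0 : PEps 0 d)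
    (e : List ℕ) (heDom : Dom e (dminus (dplus d)))
    (s k : ℕ) (hs1 : s % 2 = 1) (hk : 1 ≤ k)
    (ek1 : e.getD (k-1) 0 = s) (ek : e.getD k 0 = s)
    (hpar : (e.take k).sum % 2 = k % 2) :
    (e.take k).sum < ((dminus (dplus d)).take k).sum := by
  obtain ⟨hds, hdpos, hdsum⟩ := hd
  by_contra hc
  push_neg at hc
  have hle := heDom k
  have heq : (e.take k).sum = ((dminus (dplus d)).take k).sum := le_antisymm hle hc
  -- μ.getD k ≥ s
  have h2 := heDom (k+1)
  rw [fdc_sum_take_succ e k, fdc_sum_take_succ (dminus (dplus d)) k, ek] at h2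
  have hμk : s ≤ (dminus (dplus d)).getD k 0 := by omega
  -- μ.getD (k-1) ≤ s
  have h3 := heDom (k-1)
  have hk1 : k - 1 + 1 = k := by omega
  have he' := fdc_sum_take_succ e (k-1)
  rw [hk1, ek1] at he'
  have hμ' := fdc_sum_take_succ (dminus (dplus d)) (k-1)
  rw [hk1] at hμ'
  have hμk1 : (dminus (dplus d)).getD (k-1) 0 ≤ s := by omega
  -- d nonempty
  have hs0 : 1 ≤ s := by omega
  cases d with
  | nil => simp at hdsum; omega
  | cons d0 t =>
    cases t with
    | nil =>
      -- μ = [d0]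
      have hd0 : 0 < d0 := hdpos d0 (by simp)
      have hμeq : dminus (dplus [d0]) = [d0] := by
        show dminus [d0+1] = [d0]
        rw [dminus]
        simp [hd0]
      rw [hμeq] at hμk
      have := fdc_getD_lt_length [d0] k (by omega)
      simp at this
      omega
    | cons t0 t' =>
      set t : List ℕ := t0 :: t' with htdef
      have ht : t ≠ [] := by simp [htdef]
      obtain ⟨w, hw1, hw2, hw3, hw4⟩ := fdc_mu_structure d0 t ht hdpos
      set lst := t.getD (t.length - 1) 0 with hlstdef
      have htlen : 1 ≤ t.length := by simp [htdef]
      have hdroplen : t.dropLast.length = t.length - 1 := by simp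
      -- k ≤ t.length
      have hklen : k < (dminus (dplus (d0::t))).length := by
        apply fdc_getD_lt_length
        omega
      rw [hw1] at hklen
      simp only [List.length_cons, List.length_append, hdroplen] at hklen
      have hkt : k ≤ t.length := by omega
      -- getD values of μ
      have hμ0 : (dminus (dplus (d0::t))).getD 0 0 = d0 + 1 := by
        rw [hw1]; rfl
      have hμmid : ∀ i, 1 ≤ i → i ≤ t.length - 1 →
          (dminus (dplus (d0::t))).getD i 0 = (d0::t).getD i 0 := by
        intro i h1 h2
        rw [hw1]
        obtain ⟨i', rfl⟩ : ∃ i', i = i' + 1 := ⟨i-1, by omega⟩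
        rw [List.getD_cons_succ, List.getD_cons_succ,
          List.getD_append _ _ _ _ (by rw [hdroplen]; omega)]
        exact fdc_getD_dropLast t i' (by omega)
      have hμlast : (dminus (dplus (d0::t))).getD t.length 0 = lst - 1 := by
        rw [hw1]
        obtain ⟨tl', htl'⟩ : ∃ tl', t.length = tl' + 1 := ⟨t.length - 1, by omega⟩
        rw [htl', List.getD_cons_succ,
          List.getD_append_right _ _ _ _ (by rw [hdroplen]; omega)]
        rw [hdroplen, htl']
        simpa [htl'] using hw2
      -- last entry of d
      have hdlast : (d0::t).getD t.length 0 = lst := by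
        obtain ⟨tl', htl'⟩ : ∃ tl', t.length = tl' + 1 := ⟨t.length - 1, by omega⟩
        rw [htl', List.getD_cons_succ, hlstdef, htl']
        simp
      -- take sums
      have hμtake : ∀ j, 1 ≤ j → j ≤ t.length →
          ((dminus (dplus (d0::t))).take j).sum = (((d0::t)).take j).sum + 1 := by
        intro j h1 h2
        rw [hw1]
        obtain ⟨j', rfl⟩ : ∃ j', j = j' + 1 := ⟨j-1, by omega⟩
        rw [List.take_succ_cons, List.take_succ_cons, List.sum_cons, List.sum_cons]
        have htk : (t.dropLast ++ w).take j' = t.take j' := by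
          rw [List.take_append]
          have hz : j' - t.dropLast.length = 0 := by omega
          rw [hz]
          simp only [List.take_zero, List.append_nil]
          rw [List.dropLast_eq_take, List.take_take]
          congr 1
          omega
        rw [htk]
        omega
      -- case analysis on k
      rcases eq_or_lt_of_le hkt with hkeq | hklt
      · -- k = t.length
        rw [hkeq] at hμk
        rw [hμlast] at hμk
        have hlstge : s + 1 ≤ lst := by omega
        rcases eq_or_lt_of_le htlen with h1 | h1
        · -- t.length = 1, k = 1
          have hk1' : k = 1 := by omega
          rw [hk1'] at hμk1
          simp only [Nat.sub_self] at hμk1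
          rw [hμ0] at hμk1
          have := fdc_getD_anti (d0::t) hds (i := 0) (j := t.length) (by omega)
          rw [hdlast] at this
          simp only [List.getD_cons_zero] at this
          omega
        · -- t.length ≥ 2
          have hkm1 : (dminus (dplus (d0::t))).getD (k-1) 0 = (d0::t).getD (k-1) 0 :=
            hμmid (k-1) (by omega) (by omega)
          rw [hkm1] at hμk1
          have := fdc_getD_anti (d0::t) hds (i := k-1) (j := t.length) (by omega)
          rw [hdlast] at this
          omega
      · -- k ≤ t.length - 1
        have hdk : s ≤ (d0::t).getD k 0 := by
          rw [← hμmid k (by omega) (by omega)]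
          exact hμk
        rcases eq_or_lt_of_le hk with hk1' | hk2
        · -- k = 1
          rw [← hk1'] at hμk1
          simp only [Nat.sub_self] at hμk1
          rw [hμ0] at hμk1
          have := fdc_getD_anti (d0::t) hds (i := 0) (j := k) (by omega)
          simp only [List.getD_cons_zero] at this
          omega
        · -- k ≥ 2
          have hkm1 : (dminus (dplus (d0::t))).getD (k-1) 0 = (d0::t).getD (k-1) 0 :=
            hμmid (k-1) (by omega) (by omega)
          rw [hkm1] at hμk1
          have hmono := fdc_getD_anti (d0::t) hds (i := k-1) (j := k) (by omega)
          have hdkm1 : (d0::t).getD (k-1) 0 = s := by omega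
          have hp := fdc_parity_P0 (d0::t) hds hdP0 s k hs1 hk hdkm1
          have hμsum := hμtake k hk (by omega)
          omega

/-- If `d ∈ P^sp_D(2n) = P_{0,0}(2n)` then `f_DC(d) = ((d⁺)⁻)_C` lies in
`P^ms_C(2n) = P_{1,1}(2n)`. -/
theorem fDC_mem (n : ℕ) (hn : 1 ≤ n) (d : List ℕ)
    (hd : IsPartition (2 * n) d) (hdD : PEpsEps 0 0 d)
    (e : List ℕ) (he : IsCollapse 1 (2 * n) (dminus (dplus d)) e) :
    PEpsEps 1 1 e := by
  obtain ⟨⟨hes, hepos, hesum⟩, heP1, heDom, hemax⟩ := he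
  refine ⟨heP1, ?_⟩
  intro s hs hmem
  rcases hmem with rfl | hmem
  · omega
  have hs1 : s % 2 = 1 := by omega
  by_contra hcon
  have hhe : height e s % 2 = 0 := by omega
  set A := e.filter (fun x => decide (s < x)) with hAdef
  set B := e.filter (fun x => x == s) with hBdef
  set C := e.filter (fun x => decide (x < s)) with hCdef
  have hA : ∀ x ∈ A, s < x := by
    intro x hx; rw [hAdef, List.mem_filter] at hx; simpa using hx.2
  have hC : ∀ x ∈ C, x < s := by
    intro x hx; rw [hCdef, List.mem_filter] at hx; simpa using hx.2
  have hAe : ∀ x ∈ A, x ∈ e := by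
    intro x hx; rw [hAdef, List.mem_filter] at hx; exact hx.1
  have hCe : ∀ x ∈ C, x ∈ e := by
    intro x hx; rw [hCdef, List.mem_filter] at hx; exact hx.1
  have hdecomp0 : e = A ++ List.replicate B.length s ++ C := by
    have := fdc_filter_decomp s e hes
    rw [← fdc_replicate_of_filter s e]
    exact this
  -- multiplicity of s
  have hcount : e.count s = B.length := by
    rw [List.count_eq_countP, List.countP_eq_length_filter]
  have hmeven : Even B.length := by
    rw [← hcount]; exact heP1 s hmem hs
  have hmpos : 0 < B.length := by
    rw [← hcount]; exact List.count_pos_iff.mpr hmem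
  obtain ⟨m', hm'⟩ : ∃ m', B.length = m' + 2 := by
    rw [Nat.even_iff] at hmeven; exact ⟨B.length - 2, by omega⟩
  have hm'even : m' % 2 = 0 := by rw [Nat.even_iff] at hmeven; omega
  rw [hm'] at hdecomp0
  set a := A.length with hadef
  -- height and parity facts
  have hht := fdc_height_block e A C s (m'+2) hdecomp0 hA hC
  have haeven : a % 2 = 0 := by omega
  have hAsum : A.sum % 2 = 0 := by
    have h1 := fdc_sum_mod_two A
    have h2 : Even (A.countP (fun x => x % 2 == 1)) := by
      rw [hAdef, List.countP_filter]
      apply fdc_even_countP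
      intro v hv hpv
      simp at hpv
      exact heP1 v hv (by omega)
    rw [Nat.even_iff] at h2
    omega
  have hkey : (A.sum + a) % 2 = 0 := by omega
  -- C is empty when s = 1
  have hCs1 : s = 1 → C = [] := by
    intro h1
    rw [List.eq_nil_iff_forall_not_mem]
    intro x hx
    have := hC x hx
    have := hepos x (hCe x hx)
    omega
  -- the competing partition E
  set C' := if s = 1 then ([] : List ℕ) else (s-1) :: C with hC'def
  set E := A ++ (s+1) :: (List.replicate m' s ++ C') with hEdef
  have hC'mem : ∀ x ∈ C', x ≤ s - 1 ∧ 0 < x := by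
    intro x hx
    by_cases hss : s = 1
    · rw [hC'def, if_pos hss] at hx; simp at hx
    · rw [hC'def, if_neg hss] at hx
      have hs3 : 3 ≤ s := by omega
      rcases List.mem_cons.mp hx with rfl | hx
      · omega
      · have := hC x hx
        have := hepos x (hCe x hx)
        omega
  have hC'sum : C'.sum + 1 = s + C.sum := by
    by_cases hss : s = 1
    · rw [hC'def, if_pos hss, hCs1 hss]; simp [hss]
    · rw [hC'def, if_neg hss]; simp; omega
  have hC'count : ∀ v, v % 2 = 1 → C'.count v = C.count v := by
    intro v hv
    by_cases hss : s = 1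
    · rw [hC'def, if_pos hss, hCs1 hss]
    · rw [hC'def, if_neg hss, List.count_cons]
      have : ¬ (s - 1 = v) := by omega
      simp [this]
  have hC'sort : C'.Pairwise (· ≥ ·) := by
    by_cases hss : s = 1
    · rw [hC'def, if_pos hss]; simp
    · rw [hC'def, if_neg hss]
      rw [List.pairwise_cons]
      exact ⟨fun b hb => by have := hC b hb; omega, hes.filter _⟩
  -- take-sum comparisons between E and e
  have hEe : ∀ j, j ≤ a → (E.take j).sum = (e.take j).sum := by
    intro j hj
    have hz : j - A.length = 0 := by omega
    have h1 : E.take j = A.take j := by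
      rw [hEdef, List.take_append, hz]
      simp
    have h2 : e.take j = A.take j := by
      conv_lhs => rw [hdecomp0]
      rw [List.append_assoc, List.take_append, hz]
      simp
    rw [h1, h2]
  have hEmid : ∀ j, a + 1 ≤ j → j ≤ a + m' + 1 →
      (E.take j).sum = (e.take j).sum + 1 := by
    intro j h1 h2
    obtain ⟨q, rfl⟩ : ∃ q, j = a + q + 1 := ⟨j - a - 1, by omega⟩
    have hq : q ≤ m' := by omega
    have heside := fdc_sum_take_block e A C s (m'+2) (a+q+1) hdecomp0 (by omega) (by omega)
    rw [hEdef, List.take_append, List.take_of_length_le (by omega)]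
    have hz : a + q + 1 - a = q + 1 := by omega
    rw [hz, List.take_succ_cons, List.take_append, List.take_replicate]
    have hz2 : q ⊓ m' = q := by omega
    have hz3 : q - (List.replicate m' s).length = 0 := by simp; omega
    rw [hz2, hz3]
    simp only [List.take_zero, List.append_nil, List.sum_append, List.sum_cons,
      List.sum_replicate, smul_eq_mul]
    rw [heside]
    have hz4 : a + q + 1 - a = q + 1 := by omega
    rw [hz4]
    have : (q+1) * s = q * s + s := by ring
    omega
  have hEhigh : ∀ j, a + m' + 2 ≤ j → (E.take j).sum = (e.take j).sum := by
    intro j hj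
    obtain ⟨q, rfl⟩ : ∃ q, j = a + m' + 2 + q := ⟨j - a - m' - 2, by omega⟩
    -- e side
    have heside : (e.take (a + m' + 2 + q)).sum
        = A.sum + (m'+2) * s + (C.take q).sum := by
      rw [hdecomp0, List.take_append,
        List.take_of_length_le (l := A ++ List.replicate (m'+2) s) (by simp; omega)]
      have hz : a + m' + 2 + q - (A ++ List.replicate (m'+2) s).length = q := by
        simp; omega
      rw [hz]
      simp only [List.sum_append, List.sum_replicate, smul_eq_mul]
    -- E side
    have hEside : (E.take (a + m' + 2 + q)).sum
        = A.sum + (s + 1) + m' * s + (C'.take (q+1)).sum := by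
      rw [hEdef, List.take_append, List.take_of_length_le (by omega)]
      have hz : a + m' + 2 + q - a = (m' + 1 + q) + 1 := by omega
      rw [hz, List.take_succ_cons, List.take_append, List.take_replicate]
      have hz2 : (m' + 1 + q) ⊓ m' = m' := by omega
      have hz3 : m' + 1 + q - (List.replicate m' s).length = q + 1 := by simp; omega
      rw [hz2, hz3]
      simp [List.sum_append, List.sum_replicate, smul_eq_mul]
      ring
    rw [heside, hEside]
    by_cases hss : s = 1
    · have hCnil := hCs1 hss
      rw [hC'def, if_pos hss, hCnil]
      simp [hss]
      omega
    · rw [hC'def, if_neg hss, List.take_succ_cons]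
      simp only [List.sum_cons]
      have : (m'+2) * s = m' * s + 2 * s := by ring
      omega
  -- E is a partition
  have hElen : E.length = a + 1 + m' + C'.length := by
    rw [hEdef]; simp; omega
  have hEsum : E.sum = 2 * n := by
    have he2 : A.sum + (m'+2) * s + C.sum = 2 * n := by
      rw [hdecomp0] at hesum
      simp only [List.sum_append, List.sum_replicate, smul_eq_mul] at hesum
      omega
    rw [hEdef]
    simp only [List.sum_append, List.sum_cons, List.sum_replicate, smul_eq_mul]
    have : (m'+2) * s = m' * s + 2 * s := by ring
    omega
  have hEpos : ∀ p ∈ E, 0 < p := by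
    intro p hp
    rw [hEdef] at hp
    rcases List.mem_append.mp hp with hp | hp
    · have := hA p hp; omega
    · rcases List.mem_cons.mp hp with rfl | hp
      · omega
      · rcases List.mem_append.mp hp with hp | hp
        · have := List.eq_of_mem_replicate hp; omega
        · exact (hC'mem p hp).2
  have hEsorted : E.Pairwise (· ≥ ·) := by
    rw [hEdef]
    apply List.pairwise_append.mpr
    refine ⟨hes.filter _, ?_, ?_⟩
    · apply List.pairwise_cons.mpr
      constructor
      · intro b hb
        rcases List.mem_append.mp hb with hb | hb
        · have := List.eq_of_mem_replicate hb; omega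
        · have := (hC'mem b hb).1; omega
      · apply List.pairwise_append.mpr
        refine ⟨?_, hC'sort, ?_⟩
        · apply List.pairwise_replicate.mpr
          right; exact le_refl s
        · intro x hx y hy
          have hxs := List.eq_of_mem_replicate hx
          have := (hC'mem y hy).1
          omega
    · intro x hx y hy
      have hxs := hA x hx
      rcases List.mem_cons.mp hy with rfl | hy
      · omega
      · rcases List.mem_append.mp hy with hy | hy
        · have := List.eq_of_mem_replicate hy; omega
        · have := (hC'mem y hy).1; omega
  -- E lies in P_1
  have hEP1 : PEps 1 E := by
    intro v hv hvp
    have hv1 : v % 2 = 1 := by omega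
    have hcA : s ∉ A := by intro hsa; have := hA s hsa; omega
    have hcC : s ∉ C := by intro hsc; have := hC s hsc; omega
    have hcountE : E.count v = A.count v + (if s = v then m' else 0) + C.count v := by
      rw [hEdef, List.count_append, List.count_cons, List.count_append,
        List.count_replicate, hC'count v hv1]
      have hsv : ¬ (s + 1 = v) := by omega
      simp only [beq_iff_eq, hsv, if_false]
      omega
    by_cases hvs : v = s
    · have hif : (if s = v then m' else 0) = m' := if_pos hvs.symm
      rw [hcountE, hif, hvs, List.count_eq_zero.mpr hcA, List.count_eq_zero.mpr hcC]
      simp only [Nat.zero_add, Nat.add_zero]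
      rw [Nat.even_iff]
      exact hm'even
    · have hif : (if s = v then m' else 0) = 0 := if_neg (fun h => hvs h.symm)
      have hcounte : e.count v = A.count v + C.count v := by
        conv_lhs => rw [hdecomp0]
        rw [List.count_append, List.count_append, List.count_replicate]
        have hne : ¬ ((s : ℕ) == v) = true := by
          simp only [beq_iff_eq]
          exact fun h => hvs h.symm
        rw [if_neg hne]
        omega
      have hEv : E.count v = e.count v := by omega
      rw [hEv]
      by_cases hve : v ∈ e
      · exact heP1 v hve hvp
      · rw [List.count_eq_zero.mpr hve]
        exact Even.zero
  -- E is dominated by μ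
  have hEdom : Dom E (dminus (dplus d)) := by
    intro j
    rcases le_or_gt j a with hj | hj
    · rw [hEe j hj]; exact heDom j
    · rcases le_or_gt j (a + m' + 1) with hj2 | hj2
      · rw [hEmid j hj hj2]
        have hgd1 : e.getD (j-1) 0 = s :=
          fdc_block_getD e A C s (m'+2) (j-1) hdecomp0 (by omega) (by omega)
        have hgd2 : e.getD j 0 = s :=
          fdc_block_getD e A C s (m'+2) j hdecomp0 (by omega) (by omega)
        have hpar := fdc_parity_core e A C s (m'+2) j hdecomp0 hA hC hs1 (by omega) hgd1 hkey
        have := fdc_strict n hn d hd hdD.1 e heDom s j hs1 (by omega) hgd1 hgd2 hpar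
        omega
      · rw [hEhigh j (by omega)]
        exact heDom j
  -- maximality gives a contradiction
  have hmax := hemax E ⟨hEsorted, hEpos, hEsum⟩ hEP1 hEdom (a+1)
  rw [hEmid (a+1) (by omega) (by omega)] at hmax
  omega
end
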